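/- arXiv:1710.05586 — 3 statements merged into one kernel-verified Lean document; each statement's English description precedes it below -/
import Mathlib

section
/- If π is an admissible combinatorial datum, then the combinatorial datum R^b(π) obtained by applying the bottom Rauzy operation is also admissible. -/
/-- A pair of bijections `πt πb : A ≃ Fin d` (0-indexed positions) is *admissible* if
`πt⁻¹{0,…,k-1} ≠ πb⁻¹{0,…,k-1}` for every `k = 1,…,d-1`. -/
def RauzyAdmissible {A : Type*} {d : ℕ} (πt πb : A ≃ Fin d) : Prop :=
  ∀ k : ℕ, 0 < k → k < d → {a : A | (πt a : ℕ) < k} ≠ {a : A | (πb a : ℕ) < k}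

/-- If `π = (πt, πb)` is admissible then the datum `R^b(π) = (tt, πb)` obtained by the
bottom Rauzy operation is also admissible. -/
theorem bottom_Rauzy_operation_preserves_admissibility
    {A : Type*} [Fintype A] {d : ℕ} (hd : d = Fintype.card A) (h2 : 2 ≤ d)
    (πt πb tt : A ≃ Fin d)
    (hadm : RauzyAdmissible πt πb)
    (αt αb : A) (hαt : (πt αt : ℕ) = d - 1) (hαb : (πb αb : ℕ) = d - 1)
    (htt1 : ∀ χ : A, (πt χ : ℕ) ≤ (πt αb : ℕ) → (tt χ : ℕ) = (πt χ : ℕ))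
    (htt2 : (tt αt : ℕ) = (πt αb : ℕ) + 1)
    (htt3 : ∀ χ : A, χ ≠ αt → (πt αb : ℕ) < (πt χ : ℕ) → (tt χ : ℕ) = (πt χ : ℕ) + 1) :
    RauzyAdmissible tt πb := by
  have hne : αt ≠ αb := by
    intro h
    subst h
    refine hadm (d - 1) (by omega) (by omega) ?_
    ext a
    simp only [Set.mem_setOf_eq]
    have h1 : (πt a : ℕ) < d := (πt a).isLt
    have h2' : (πb a : ℕ) < d := (πb a).isLt
    constructor
    · intro ha
      have hat : a ≠ αt := fun hc => by subst hc; omega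
      have : (πb a : ℕ) ≠ d - 1 := fun hc =>
        hat (πb.injective (Fin.val_injective (by omega)))
      omega
    · intro hb
      have hat : a ≠ αt := fun hc => by subst hc; omega
      have : (πt a : ℕ) ≠ d - 1 := fun hc =>
        hat (πt.injective (Fin.val_injective (by omega)))
      omega
  have hp : (πt αb : ℕ) < d - 1 := by
    have h1 : (πt αb : ℕ) < d := (πt αb).isLt
    have hne' : (πt αb : ℕ) ≠ d - 1 := fun hc =>
      hne (πt.injective (Fin.val_injective (by omega)))
    omega
  intro k hk0 hkd
  rcases le_or_gt k (πt αb : ℕ) with hk | hk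
  · have hset : {a : A | (tt a : ℕ) < k} = {a : A | (πt a : ℕ) < k} := by
      ext a
      simp only [Set.mem_setOf_eq]
      rcases le_or_gt (πt a : ℕ) (πt αb : ℕ) with h | h
      · rw [htt1 a h]
      · rcases eq_or_ne a αt with rfl | hat
        · rw [htt2]; omega
        · rw [htt3 a hat h]; omega
    rw [hset]
    exact hadm k hk0 hkd
  · intro heq
    have h1 : αb ∈ {a : A | (tt a : ℕ) < k} := by
      simp only [Set.mem_setOf_eq]
      rw [htt1 αb le_rfl]
      omega
    rw [heq] at h1
    simp only [Set.mem_setOf_eq] at h1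
    omega
end

section
/- An interval exchange transformation T = T(π, λ) with irrational-type length data admits the k-th Rauzy induction step for every k ∈ ℕ if and only if T has no connections, where a connection is a triple (β, α, n) with n ≥ 0, π_b(β) ≥ 2, π_t(α) ≥ 2 such that Tⁿ(u_β^b) = u_α^t. In particular, if λ belongs to the complement of a countable union of hyperplanes in ℝ₊^𝒜, then T is infinitely renormalizable. -/
namespace KeaneIET

variable {A : Type*} [Fintype A] [DecidableEq A]

/-- Critical point `u^t_a = Σ_{π_t(χ) ≤ π_t(a) − 1} λ_χ`. -/
noncomputable def utI (pit : A → ℕ) (lam : A → ℝ) (a : A) : ℝ :=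
  ∑ x ∈ Finset.univ.filter (fun x => pit x < pit a), lam x

/-- Critical value `u^b_a = Σ_{π_b(χ) ≤ π_b(a) − 1} λ_χ`. -/
noncomputable def ubI (pib : A → ℕ) (lam : A → ℝ) (a : A) : ℝ :=
  ∑ x ∈ Finset.univ.filter (fun x => pib x < pib a), lam x

/-- The interval exchange transformation `T(π,λ)`: on `I^t_a` it is the
translation `x ↦ x − u^t_a + u^b_a`. -/
noncomputable def ietMap (pit pib : A → ℕ) (lam : A → ℝ) (x : ℝ) : ℝ :=
  if h : ∃ a : A, utI pit lam a ≤ x ∧ x < utI pit lam a + lam a then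
    x - utI pit lam (Classical.choose h) + ubI pib lam (Classical.choose h)
  else x

/-- One step of Rauzy induction on interval exchange transformations, acting on
combinatorial and length data (positions in `{1,…,d}`). -/
def IETStep (d : ℕ) (pt pb pt' pb' : A → ℕ) (lam lam' : A → ℝ) : Prop :=
  ∃ at_ ab : A, pt at_ = d ∧ pb ab = d ∧
    ((lam ab < lam at_ ∧   -- top case, winner `at_`, loser `ab`
        pt' = pt ∧
        (∀ x, pb x ≤ pb at_ → pb' x = pb x) ∧
        pb' ab = pb at_ + 1 ∧
        (∀ x, x ≠ ab → pb at_ < pb x → pb' x = pb x + 1) ∧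
        lam' at_ = lam at_ - lam ab ∧ (∀ x, x ≠ at_ → lam' x = lam x)) ∨
      (lam at_ < lam ab ∧  -- bottom case, winner `ab`, loser `at_`
        pb' = pb ∧
        (∀ x, pt x ≤ pt ab → pt' x = pt x) ∧
        pt' at_ = pt ab + 1 ∧
        (∀ x, x ≠ at_ → pt ab < pt x → pt' x = pt x + 1) ∧
        lam' ab = lam ab - lam at_ ∧ (∀ x, x ≠ ab → lam' x = lam x)))

/-- `T(π,λ)` admits the `k`-th step of Rauzy induction for every `k`. -/
def AdmitsAllSteps (d : ℕ) (pit pib : A → ℕ) (lam : A → ℝ) : Prop :=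
  ∃ (pt pb : ℕ → A → ℕ) (L : ℕ → A → ℝ),
    pt 0 = pit ∧ pb 0 = pib ∧ L 0 = lam ∧
    ∀ k : ℕ, IETStep d (pt k) (pb k) (pt (k + 1)) (pb (k + 1)) (L k) (L (k + 1))

/-- `T(π,λ)` has a connection: a triple `(β, α, n)` with `n ≥ 0`,
`π_b(β) ≥ 2`, `π_t(α) ≥ 2` and `Tⁿ(u^b_β) = u^t_α`. -/
def HasConnection (pit pib : A → ℕ) (lam : A → ℝ) : Prop :=
  ∃ (b a : A) (n : ℕ), 2 ≤ pib b ∧ 2 ≤ pit a ∧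
    (ietMap pit pib lam)^[n] (ubI pib lam b) = utI pit lam a

set_option linter.unusedSectionVars false
set_option linter.unusedVariables false
set_option maxHeartbeats 1000000
/-! ### Basic lemmas about `utI` -/

noncomputable def tot (lam : A → ℝ) : ℝ := ∑ x, lam x

lemma ubI_eq_utI (p : A → ℕ) (lam : A → ℝ) : ubI p lam = utI p lam := rfl

structure Good (d : ℕ) (pt pb : A → ℕ) (lam : A → ℝ) : Prop where
  card : Fintype.card A = d
  two : 2 ≤ d
  tinj : Function.Injective pt
  binj : Function.Injective pb
  trng : ∀ a, 1 ≤ pt a ∧ pt a ≤ d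
  brng : ∀ a, 1 ≤ pb a ∧ pb a ≤ d
  pos : ∀ a, 0 < lam a
  adm : ∀ k, 1 ≤ k → k < d → {a : A | pt a ≤ k} ≠ {a : A | pb a ≤ k}

lemma Good.symm {d} {pt pb : A → ℕ} {lam : A → ℝ} (g : Good d pt pb lam) :
    Good d pb pt lam :=
  ⟨g.card, g.two, g.binj, g.tinj, g.brng, g.trng, g.pos,
   fun k h1 h2 h => g.adm k h1 h2 h.symm⟩

section P
variable {d : ℕ} {p : A → ℕ} {lam : A → ℝ}

lemma psurj (hinj : Function.Injective p)
    (hrng : ∀ a, 1 ≤ p a ∧ p a ≤ d) (hcard : Fintype.card A = d)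
    {n : ℕ} (h1 : 1 ≤ n) (h2 : n ≤ d) : ∃ a, p a = n := by
  have hsub : Finset.image p Finset.univ ⊆ Finset.Icc 1 d := by
    intro m hm
    simp only [Finset.mem_image] at hm
    obtain ⟨a, _, rfl⟩ := hm
    exact Finset.mem_Icc.2 (hrng a)
  have hcard2 : (Finset.Icc 1 d).card ≤ (Finset.image p Finset.univ).card := by
    rw [Finset.card_image_of_injective _ hinj, Finset.card_univ, hcard, Nat.card_Icc]
    omega
  have heq := Finset.eq_of_subset_of_card_le hsub hcard2
  have hn : n ∈ Finset.image p Finset.univ := by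
    rw [heq]; exact Finset.mem_Icc.2 ⟨h1, h2⟩
  simpa using hn

lemma utI_nonneg (hpos : ∀ a, 0 < lam a) (a : A) : 0 ≤ utI p lam a :=
  Finset.sum_nonneg fun x _ => (hpos x).le

lemma utI_succ (hinj : Function.Injective p) {a b : A} (h : p b = p a + 1) :
    utI p lam b = utI p lam a + lam a := by
  have hset : Finset.univ.filter (fun x => p x < p b)
      = insert a (Finset.univ.filter fun x => p x < p a) := by
    ext x
    simp only [Finset.mem_filter, Finset.mem_univ, true_and, Finset.mem_insert, h]
    constructor
    · intro hx
      rcases Nat.lt_succ_iff_lt_or_eq.1 hx with h' | h'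
      · exact Or.inr h'
      · exact Or.inl (hinj h')
    · rintro (rfl | hx) <;> omega
  rw [utI, hset, Finset.sum_insert (by simp), utI]
  ring

lemma utI_add_le_of_lt (hpos : ∀ a, 0 < lam a) {a b : A} (h : p a < p b) :
    utI p lam a + lam a ≤ utI p lam b := by
  have hset : insert a (Finset.univ.filter fun x => p x < p a)
      ⊆ Finset.univ.filter (fun x => p x < p b) := by
    intro x hx
    simp only [Finset.mem_insert, Finset.mem_filter, Finset.mem_univ, true_and] at hx ⊢
    rcases hx with rfl | hx <;> omega
  calc utI p lam a + lam a = ∑ x ∈ insert a (Finset.univ.filter fun x => p x < p a), lam x := by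
        rw [Finset.sum_insert (by simp), utI]; ring
    _ ≤ _ := Finset.sum_le_sum_of_subset_of_nonneg hset fun x _ _ => (hpos x).le

lemma utI_add_le_tot (hpos : ∀ a, 0 < lam a) (a : A) :
    utI p lam a + lam a ≤ tot lam := by
  calc utI p lam a + lam a = ∑ x ∈ insert a (Finset.univ.filter fun x => p x < p a), lam x := by
        rw [Finset.sum_insert (by simp), utI]; ring
    _ ≤ _ := Finset.sum_le_sum_of_subset_of_nonneg (Finset.subset_univ _)
        fun x _ _ => (hpos x).le

lemma utI_last (hinj : Function.Injective p) (hrng : ∀ a, 1 ≤ p a ∧ p a ≤ d)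
    {a : A} (h : p a = d) : utI p lam a + lam a = tot lam := by
  have hset : Finset.univ = insert a (Finset.univ.filter fun x => p x < p a) := by
    ext x
    simp only [Finset.mem_univ, true_iff, Finset.mem_insert, Finset.mem_filter, true_and]
    rcases eq_or_ne x a with rfl | hx
    · exact Or.inl rfl
    · refine Or.inr ?_
      have h1 := (hrng x).2
      have h2 : p x ≠ p a := fun hc => hx (hinj hc)
      omega
  rw [tot, hset, Finset.sum_insert (by simp), utI]; ring

lemma utI_eq_zero (hrng : ∀ a, 1 ≤ p a ∧ p a ≤ d) {a : A} (h : p a = 1) :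
    utI p lam a = 0 := by
  rw [utI]
  have : Finset.univ.filter (fun x => p x < p a) = ∅ := by
    ext x
    simp only [Finset.mem_filter, Finset.mem_univ, true_and, Finset.notMem_empty, iff_false, h]
    have := (hrng x).1; omega
  rw [this, Finset.sum_empty]

lemma utI_pos (hinj : Function.Injective p) (hrng : ∀ a, 1 ≤ p a ∧ p a ≤ d)
    (hcard : Fintype.card A = d) (hpos : ∀ a, 0 < lam a) {a : A} (h : 2 ≤ p a) :
    0 < utI p lam a := by
  obtain ⟨b, hb⟩ := psurj hinj hrng hcard le_rfl (le_trans (by omega) (hrng a).2)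
  refine Finset.sum_pos (fun x _ => hpos x) ⟨b, ?_⟩
  simp only [Finset.mem_filter, Finset.mem_univ, true_and]
  omega

lemma mem_interval_unique (hinj : Function.Injective p) (hpos : ∀ a, 0 < lam a)
    {a b : A} {x : ℝ}
    (ha : utI p lam a ≤ x ∧ x < utI p lam a + lam a)
    (hb : utI p lam b ≤ x ∧ x < utI p lam b + lam b) : a = b := by
  rcases Nat.lt_trichotomy (p a) (p b) with h | h | h
  · have hle := utI_add_le_of_lt (lam := lam) hpos h
    linarith [ha.2, hb.1]
  · exact hinj h
  · have hle := utI_add_le_of_lt (lam := lam) hpos h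
    linarith [ha.1, hb.2]

lemma exists_interval (hinj : Function.Injective p) (hrng : ∀ a, 1 ≤ p a ∧ p a ≤ d)
    (hcard : Fintype.card A = d) (hpos : ∀ a, 0 < lam a) {x : ℝ}
    (hx0 : 0 ≤ x) (hxs : x < tot lam) :
    ∃ a, utI p lam a ≤ x ∧ x < utI p lam a + lam a := by
  have hne : Nonempty A := by
    by_contra hA
    rw [not_nonempty_iff] at hA
    rw [tot, Finset.univ_eq_empty, Finset.sum_empty] at hxs
    linarith
  obtain ⟨a0⟩ := hne
  have h1d : 1 ≤ d := le_trans (hrng a0).1 (hrng a0).2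
  obtain ⟨a1, ha1⟩ := psurj hinj hrng hcard le_rfl h1d
  set s : Finset A := Finset.univ.filter (fun a => utI p lam a ≤ x) with hs
  have hsne : s.Nonempty := by
    refine ⟨a1, ?_⟩
    simp only [hs, Finset.mem_filter, Finset.mem_univ, true_and]
    rw [utI_eq_zero hrng ha1]
    exact hx0
  obtain ⟨a, has, hmax⟩ := Finset.exists_max_image s p hsne
  have hax : utI p lam a ≤ x := (Finset.mem_filter.1 has).2
  refine ⟨a, hax, ?_⟩
  by_contra hcon
  push_neg at hcon
  rcases eq_or_lt_of_le (hrng a).2 with hd | hlt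
  · have := utI_last (lam := lam) hinj hrng hd
    linarith
  · obtain ⟨b, hb⟩ := psurj hinj hrng hcard (by omega : 1 ≤ p a + 1) hlt
    have hub : utI p lam b ≤ x := by rw [utI_succ hinj hb]; exact hcon
    have hbs : b ∈ s := by
      simp only [hs, Finset.mem_filter, Finset.mem_univ, true_and]; exact hub
    have := hmax b hbs
    omega

end P

/-! ### Basic lemmas about `ietMap` -/

section Map
variable {d : ℕ} {pt pb : A → ℕ} {lam : A → ℝ}

lemma ietMap_apply (g : Good d pt pb lam) {x : ℝ} {a : A}
    (h : utI pt lam a ≤ x ∧ x < utI pt lam a + lam a) :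
    ietMap pt pb lam x = x - utI pt lam a + ubI pb lam a := by
  have hex : ∃ a, utI pt lam a ≤ x ∧ x < utI pt lam a + lam a := ⟨a, h⟩
  rw [ietMap, dif_pos hex]
  rw [mem_interval_unique g.tinj g.pos (Classical.choose_spec hex) h]

lemma ietMap_mem (g : Good d pt pb lam) {x : ℝ} {a : A}
    (h : utI pt lam a ≤ x ∧ x < utI pt lam a + lam a) :
    ubI pb lam a ≤ ietMap pt pb lam x ∧
      ietMap pt pb lam x < ubI pb lam a + lam a := by
  rw [ietMap_apply g h]
  constructor <;> [linarith [h.1]; linarith [h.2]]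

lemma ietMap_into (g : Good d pt pb lam) {x : ℝ}
    (hx0 : 0 ≤ x) (hxs : x < tot lam) :
    0 ≤ ietMap pt pb lam x ∧ ietMap pt pb lam x < tot lam := by
  obtain ⟨a, ha⟩ := exists_interval g.tinj g.trng g.card g.pos hx0 hxs
  have hm := ietMap_mem g ha
  rw [ubI_eq_utI] at hm
  constructor
  · exact le_trans (utI_nonneg g.pos a) hm.1
  · exact lt_of_lt_of_le hm.2 (utI_add_le_tot g.pos a)

lemma ietMap_iterate_into (g : Good d pt pb lam) {x : ℝ}
    (hx0 : 0 ≤ x) (hxs : x < tot lam) (n : ℕ) :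
    0 ≤ (ietMap pt pb lam)^[n] x ∧ (ietMap pt pb lam)^[n] x < tot lam := by
  induction n with
  | zero => exact ⟨hx0, hxs⟩
  | succ n ih =>
    rw [Function.iterate_succ_apply']
    exact ietMap_into g ih.1 ih.2

lemma ietMap_injOn (g : Good d pt pb lam) {x y : ℝ}
    (hx0 : 0 ≤ x) (hxs : x < tot lam) (hy0 : 0 ≤ y) (hys : y < tot lam)
    (hxy : ietMap pt pb lam x = ietMap pt pb lam y) : x = y := by
  obtain ⟨a, ha⟩ := exists_interval g.tinj g.trng g.card g.pos hx0 hxs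
  obtain ⟨b, hb⟩ := exists_interval g.tinj g.trng g.card g.pos hy0 hys
  have hma := ietMap_mem g ha
  have hmb := ietMap_mem g hb
  rw [hxy] at hma
  rw [ubI_eq_utI] at hma hmb
  have hab : a = b := mem_interval_unique g.binj g.pos hma hmb
  subst hab
  rw [ietMap_apply g ha, ietMap_apply g hb] at hxy
  linarith

end Map



/-! ### One Rauzy step: case analysis -/

def TopCase (pt pb pt' pb' : A → ℕ) (lam lam' : A → ℝ) (a b : A) : Prop :=
  lam b < lam a ∧ pt' = pt ∧
  (∀ x, pb x ≤ pb a → pb' x = pb x) ∧ pb' b = pb a + 1 ∧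
  (∀ x, x ≠ b → pb a < pb x → pb' x = pb x + 1) ∧
  lam' a = lam a - lam b ∧ (∀ x, x ≠ a → lam' x = lam x)

lemma IETStep_iff {d : ℕ} {pt pb pt' pb' : A → ℕ} {lam lam' : A → ℝ} :
    IETStep d pt pb pt' pb' lam lam' ↔ ∃ a b : A, pt a = d ∧ pb b = d ∧
      (TopCase pt pb pt' pb' lam lam' a b ∨ TopCase pb pt pb' pt' lam lam' b a) :=
  Iff.rfl

section Step

variable {d : ℕ} {pt pb pt' pb' : A → ℕ} {lam lam' : A → ℝ} {a b : A}

lemma le_pred_iff {p : A → ℕ} (hinj : Function.Injective p)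
    (hrng : ∀ x, 1 ≤ p x ∧ p x ≤ d) {c : A} (hc : p c = d) (x : A) :
    p x ≤ d - 1 ↔ x ≠ c := by
  constructor
  · intro h hxc
    subst hxc
    rw [hc] at h
    have h0 := (hrng x).1
    have h0' := (hrng x).2
    omega
  · intro h
    have h1 := (hrng x).2
    have h2 : p x ≠ d := fun hh => h (hinj (hh.trans hc.symm))
    omega

/-- the letters in position `d` on top and bottom are distinct. -/
lemma step_ne (g : Good d pt pb lam) (hat : pt a = d) (hab : pb b = d) : a ≠ b := by
  intro heq
  subst heq
  refine g.adm (d - 1) (by have := g.two; omega) (by have := g.two; omega) ?_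
  ext x
  simp only [Set.mem_setOf_eq]
  rw [le_pred_iff g.tinj g.trng hat, le_pred_iff g.binj g.brng hab]

/-- position of the winner on the loser side is `< d`. -/
lemma winner_lt (g : Good d pt pb lam) (hat : pt a = d) (hab : pb b = d) :
    pb a < d := by
  have hne := step_ne g hat hab
  have h1 := (g.brng a).2
  have h2 : pb a ≠ d := fun hh => hne (g.binj (hh.trans hab.symm))
  omega

lemma ut_le_ut_last (g : Good d pt pb lam) (hat : pt a = d) (z : A) :
    utI pt lam z ≤ utI pt lam a := by
  rcases eq_or_ne z a with rfl | hz
  · exact le_rfl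
  · have hlt : pt z < pt a := by
      have h1 := (g.trng z).2
      have h2 : pt z ≠ pt a := fun hh => hz (g.tinj hh)
      omega
    have := utI_add_le_of_lt (lam := lam) g.pos hlt
    have := g.pos z
    linarith

lemma ut_last_eq (g : Good d pt pb lam) (hat : pt a = d) :
    utI pt lam a = tot lam - lam a := by
  have := utI_last (lam := lam) g.tinj g.trng hat
  linarith

section TopLemmas

variable (g : Good d pt pb lam) (hat : pt a = d) (hab : pb b = d)
  (tc : TopCase pt pb pt' pb' lam lam' a b)

include g hat hab tc

lemma top_pb'_formula (x : A) :
    pb' x = if pb x ≤ pb a then pb x else if x = b then pb a + 1 else pb x + 1 := by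
  obtain ⟨hlt, hpt', hb1, hb2, hb3, hl1, hl2⟩ := tc
  by_cases h1 : pb x ≤ pb a
  · rw [if_pos h1]; exact hb1 x h1
  · rw [if_neg h1]
    by_cases h2 : x = b
    · subst h2; rw [if_pos rfl]; exact hb2
    · rw [if_neg h2]; exact hb3 x h2 (by omega)

lemma top_lam'_update : lam' = Function.update lam a (lam a - lam b) := by
  funext x
  rcases eq_or_ne x a with rfl | hx
  · rw [Function.update_self]; exact tc.2.2.2.2.2.1
  · rw [Function.update_of_ne hx]; exact tc.2.2.2.2.2.2 x hx

lemma top_lam'_pos : ∀ x, 0 < lam' x := by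
  intro x
  rcases eq_or_ne x a with rfl | hx
  · rw [tc.2.2.2.2.2.1]; linarith [tc.1]
  · rw [tc.2.2.2.2.2.2 x hx]; exact g.pos x

lemma top_tot : tot lam' = tot lam - lam b := by
  rw [top_lam'_update g hat hab tc, tot,
    Finset.sum_update_of_mem (Finset.mem_univ a)]
  have h := Finset.add_sum_erase Finset.univ lam (Finset.mem_univ a)
  rw [tot, ← Finset.erase_eq]
  linarith

lemma top_pb'_inj : Function.Injective pb' := by
  intro x y hxy
  have key : (if pb x ≤ pb a then pb x else if x = b then pb a + 1 else pb x + 1)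
      = (if pb y ≤ pb a then pb y else if y = b then pb a + 1 else pb y + 1) := by
    rw [← top_pb'_formula g hat hab tc x, ← top_pb'_formula g hat hab tc y, hxy]
  have hbd : pb b = d := hab
  split_ifs at key <;>
    first
      | exact g.binj key
      | exact g.binj (by omega)
      | omega
      | simp_all

lemma top_pb'_rng : ∀ x, 1 ≤ pb' x ∧ pb' x ≤ d := by
  intro x
  rw [top_pb'_formula g hat hab tc x]
  have h1 := g.brng x
  have h2 := winner_lt g hat hab
  split_ifs with h3 h4
  · exact h1
  · omega
  · have : pb x ≠ d := fun hh => h4 (g.binj (hh.trans hab.symm))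
    omega

lemma top_pb'_le_iff {k : ℕ} (hk : k ≤ pb a) (x : A) : pb' x ≤ k ↔ pb x ≤ k := by
  rw [top_pb'_formula g hat hab tc x]
  have hd := (g.brng x).2
  split_ifs with h1 h2
  · exact Iff.rfl
  · subst h2
    rw [hab]
    have := winner_lt g hat hab
    omega
  · omega

lemma top_good : Good d pt' pb' lam' := by
  refine ⟨g.card, g.two, ?_, top_pb'_inj g hat hab tc, ?_, top_pb'_rng g hat hab tc,
    top_lam'_pos g hat hab tc, ?_⟩
  · rw [tc.2.1]; exact g.tinj
  · rw [tc.2.1]; exact g.trng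
  · intro k hk1 hkd
    rw [tc.2.1]
    by_cases hk : k ≤ pb a
    · have hs : {x : A | pb' x ≤ k} = {x : A | pb x ≤ k} := by
        ext x
        simp only [Set.mem_setOf_eq]
        exact top_pb'_le_iff g hat hab tc hk x
      rw [hs]
      exact g.adm k hk1 hkd
    · intro hEq
      have ha1 : a ∈ {x : A | pb' x ≤ k} := by
        simp only [Set.mem_setOf_eq]
        rw [top_pb'_formula g hat hab tc a, if_pos le_rfl]
        omega
      rw [← hEq] at ha1
      simp only [Set.mem_setOf_eq, hat] at ha1
      omega

lemma top_pb'_one_iff (x : A) : pb' x = 1 ↔ pb x = 1 := by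
  rw [top_pb'_formula g hat hab tc x]
  have h1 := (g.brng a).1
  have h2 := (g.brng x).1
  have h3 := g.two
  split_ifs with h4 h5
  · exact Iff.rfl
  · subst h5
    rw [hab]
    omega
  · omega

/-- top case: all top critical points are unchanged. -/
lemma top_ut_eq (z : A) : utI pt' lam' z = utI pt lam z := by
  rw [utI, utI, tc.2.1]
  refine Finset.sum_congr rfl fun x hx => ?_
  simp only [Finset.mem_filter, Finset.mem_univ, true_and] at hx
  refine tc.2.2.2.2.2.2 x fun hxa => ?_
  subst hxa
  rw [hat] at hx
  have := (g.trng z).2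
  omega

/-- top case: bottom critical values other than the loser's are unchanged. -/
lemma top_ub_eq (z : A) (hz : z ≠ b) : utI pb' lam' z = utI pb lam z := by
  have hne := step_ne g hat hab
  have hwl : pb a < d := winner_lt g hat hab
  have hbd : pb b = d := hab
  by_cases hza : pb z ≤ pb a
  · have hset : Finset.univ.filter (fun x => pb' x < pb' z)
        = Finset.univ.filter (fun x => pb x < pb z) := by
      ext x
      simp only [Finset.mem_filter, Finset.mem_univ, true_and]
      rw [top_pb'_formula g hat hab tc x, top_pb'_formula g hat hab tc z, if_pos hza]
      have hz2 := (g.brng z).2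
      by_cases hx1 : pb x ≤ pb a
      · rw [if_pos hx1]
      · by_cases hxb : x = b
        · rw [if_neg hx1, if_pos hxb]
          have hxd : pb x = d := by rw [hxb]; exact hbd
          omega
        · rw [if_neg hx1, if_neg hxb]
          omega
    rw [utI, utI, hset]
    refine Finset.sum_congr rfl fun x hx => ?_
    simp only [Finset.mem_filter, Finset.mem_univ, true_and] at hx
    refine tc.2.2.2.2.2.2 x fun hxa => ?_
    subst hxa
    omega
  · push_neg at hza
    have hzd : pb z < d := by
      have h1 := (g.brng z).2
      have h2 : pb z ≠ d := fun hh => hz (g.binj (hh.trans hab.symm))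
      omega
    have hset : Finset.univ.filter (fun x => pb' x < pb' z)
        = insert b (Finset.univ.filter (fun x => pb x < pb z)) := by
      ext x
      simp only [Finset.mem_filter, Finset.mem_univ, true_and, Finset.mem_insert]
      have hzf : pb' z = pb z + 1 := by
        rw [top_pb'_formula g hat hab tc z, if_neg (by omega), if_neg hz]
      rw [top_pb'_formula g hat hab tc x, hzf]
      by_cases hx1 : pb x ≤ pb a
      · rw [if_pos hx1]
        constructor
        · intro _; exact Or.inr (by omega)
        · intro _; omega
      · by_cases hxb : x = b
        · rw [if_neg hx1, if_pos hxb]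
          constructor
          · intro _; exact Or.inl hxb
          · intro _; omega
        · rw [if_neg hx1, if_neg hxb]
          constructor
          · intro h; exact Or.inr (by omega)
          · intro h
            rcases h with h' | h'
            · exact absurd h' hxb
            · omega
    have hbnot : b ∉ Finset.univ.filter (fun x => pb x < pb z) := by
      simp only [Finset.mem_filter, Finset.mem_univ, true_and, hab, not_lt]
      omega
    have hain : a ∈ Finset.univ.filter (fun x => pb x < pb z) := by
      simp only [Finset.mem_filter, Finset.mem_univ, true_and]
      omega
    rw [utI, utI, hset, Finset.sum_insert hbnot]
    have hlb : lam' b = lam b :=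
      tc.2.2.2.2.2.2 b (step_ne g hat hab).symm
    rw [hlb, top_lam'_update g hat hab tc,
      Finset.sum_update_of_mem hain, ← Finset.erase_eq]
    have h := Finset.add_sum_erase _ lam hain
    linarith

/-- top case: the loser's new bottom critical value. -/
lemma top_ub_loser : utI pb' lam' b = utI pb lam a + lam a - lam b := by
  have hne := step_ne g hat hab
  have hwl : pb a < d := winner_lt g hat hab
  have hbd : pb b = d := hab
  have hset : Finset.univ.filter (fun x => pb' x < pb' b)
      = insert a (Finset.univ.filter (fun x => pb x < pb a)) := by
    ext x
    simp only [Finset.mem_filter, Finset.mem_univ, true_and, Finset.mem_insert]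
    rw [top_pb'_formula g hat hab tc x, tc.2.2.2.1]
    by_cases hx1 : pb x ≤ pb a
    · rw [if_pos hx1]
      constructor
      · intro _
        rcases eq_or_ne x a with rfl | hxa
        · exact Or.inl rfl
        · have : pb x ≠ pb a := fun hh => hxa (g.binj hh)
          exact Or.inr (by omega)
      · intro _; omega
    · by_cases hxb : x = b
      · rw [if_neg hx1, if_pos hxb]
        constructor
        · intro h; omega
        · intro h
          rcases h with h' | h'
          · exact absurd (h'.symm.trans hxb) hne
          · exfalso; rw [hxb] at h'; omega
      · rw [if_neg hx1, if_neg hxb]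
        constructor
        · intro h; omega
        · intro h
          rcases h with h' | h'
          · exfalso; rw [h'] at hx1; exact hx1 le_rfl
          · omega
  have hanot : a ∉ Finset.univ.filter (fun x => pb x < pb a) := by simp
  rw [utI, utI, hset, Finset.sum_insert hanot, tc.2.2.2.2.2.1]
  have hsum : ∑ x ∈ Finset.univ.filter (fun x => pb x < pb a), lam' x
      = ∑ x ∈ Finset.univ.filter (fun x => pb x < pb a), lam x := by
    refine Finset.sum_congr rfl fun x hx => ?_
    simp only [Finset.mem_filter, Finset.mem_univ, true_and] at hx
    exact tc.2.2.2.2.2.2 x (fun hh => by subst hh; omega)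
  rw [hsum]
  ring

end TopLemmas

end Step

/-! ### One Rauzy step: dynamics -/

section Dyn

variable {d : ℕ} {pt pb pt' pb' : A → ℕ} {lam lam' : A → ℝ} {a b : A}

section TopDyn

variable (g : Good d pt pb lam) (hat : pt a = d) (hab : pb b = d)
  (tc : TopCase pt pb pt' pb' lam lam' a b)

include g hat hab tc

/-- top case: the loser's new critical value is the image of the old one. -/
lemma top_D1 : utI pb' lam' b = ietMap pt pb lam (utI pb lam b) := by
  have hut : utI pt lam a = tot lam - lam a := ut_last_eq g hat
  have hub : utI pb lam b = tot lam - lam b := ut_last_eq g.symm hab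
  have h1 : utI pt lam a ≤ utI pb lam b ∧ utI pb lam b < utI pt lam a + lam a := by
    constructor
    · rw [hut, hub]; linarith [tc.1]
    · rw [hut, hub]; linarith [g.pos b]
  rw [ietMap_apply g h1, top_ub_loser g hat hab tc, ubI_eq_utI, hut, hub]
  ring

lemma top_dich : ∀ y, 0 ≤ y → y < tot lam' →
    (ietMap pt' pb' lam' y = ietMap pt pb lam y ∧
      0 ≤ ietMap pt pb lam y ∧ ietMap pt pb lam y < tot lam') ∨
    (ietMap pt' pb' lam' y = ietMap pt pb lam (ietMap pt pb lam y) ∧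
      tot lam' ≤ ietMap pt pb lam y ∧ ietMap pt pb lam y < tot lam ∧
      0 ≤ ietMap pt pb lam (ietMap pt pb lam y) ∧
      ietMap pt pb lam (ietMap pt pb lam y) < tot lam') := by
  intro y hy0 hys'
  have hne := step_ne g hat hab
  have hwl : pb a < d := winner_lt g hat hab
  have g' : Good d pt' pb' lam' := top_good g hat hab tc
  have hstot : tot lam' = tot lam - lam b := top_tot g hat hab tc
  have hut : utI pt lam a = tot lam - lam a := ut_last_eq g hat
  have hub : utI pb lam b = tot lam - lam b := ut_last_eq g.symm hab
  have hys : y < tot lam := by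
    have := g.pos b
    linarith
  obtain ⟨c, hc⟩ := exists_interval g.tinj g.trng g.card g.pos hy0 hys
  have hTy := ietMap_apply g hc
  have hmem := ietMap_mem g hc
  rw [ubI_eq_utI] at hTy hmem
  by_cases hcb : c = b
  · subst hcb
    refine Or.inr ?_
    have hTy1 : tot lam' ≤ ietMap pt pb lam y := by rw [hstot]; linarith [hmem.1, hub]
    have hTy2 : ietMap pt pb lam y < tot lam := by linarith [hmem.2, hub]
    have hTmem : utI pt lam a ≤ ietMap pt pb lam y ∧
        ietMap pt pb lam y < utI pt lam a + lam a := by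
      constructor
      · rw [hut]; linarith [tc.1]
      · rw [hut]; linarith
    have hTT := ietMap_apply g hTmem
    have hTTmem := ietMap_mem g hTmem
    rw [ubI_eq_utI] at hTT hTTmem
    have hlamc : lam' c = lam c := tc.2.2.2.2.2.2 c (fun hh => hne hh.symm)
    have hc' : utI pt' lam' c ≤ y ∧ y < utI pt' lam' c + lam' c := by
      rw [top_ut_eq g hat hab tc, hlamc]
      exact hc
    have hT'y := ietMap_apply g' hc'
    rw [ubI_eq_utI] at hT'y
    have hub'c := top_ub_loser g hat hab tc
    have hub_lt : utI pb lam a + lam a ≤ utI pb lam c :=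
      utI_add_le_of_lt g.pos (by rw [hab]; exact hwl)
    have hub_nn : 0 ≤ utI pb lam a := utI_nonneg g.pos a
    refine ⟨?_, hTy1, hTy2, by linarith [hTTmem.1],
      by linarith [hTTmem.2, hub_lt, hub, hstot]⟩
    rw [hT'y, hTT, hTy, hub'c, top_ut_eq g hat hab tc]
    rw [hut, hub]
    ring
  · refine Or.inl ?_
    have hclt : pb c < pb b := by
      have h1 := (g.brng c).2
      have h2 : pb c ≠ d := fun hh => hcb (g.binj (hh.trans hab.symm))
      rw [hab]; omega
    have hble : utI pb lam c + lam c ≤ utI pb lam b := utI_add_le_of_lt g.pos hclt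
    have hbnd1 : 0 ≤ ietMap pt pb lam y := le_trans (utI_nonneg g.pos c) hmem.1
    have hbnd2 : ietMap pt pb lam y < tot lam' := by
      rw [hstot]; linarith [hmem.2, hub]
    refine ⟨?_, hbnd1, hbnd2⟩
    by_cases hca : c = a
    · subst hca
      have hc' : utI pt' lam' c ≤ y ∧ y < utI pt' lam' c + lam' c := by
        rw [top_ut_eq g hat hab tc, tc.2.2.2.2.2.1]
        refine ⟨hc.1, ?_⟩
        rw [hut]
        linarith [hstot]
      have hT'y := ietMap_apply g' hc'
      rw [ubI_eq_utI] at hT'y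
      rw [hT'y, hTy, top_ut_eq g hat hab tc, top_ub_eq g hat hab tc c hcb]
    · have hc' : utI pt' lam' c ≤ y ∧ y < utI pt' lam' c + lam' c := by
        rw [top_ut_eq g hat hab tc, tc.2.2.2.2.2.2 c hca]
        exact hc
      have hT'y := ietMap_apply g' hc'
      rw [ubI_eq_utI] at hT'y
      rw [hT'y, hTy, top_ut_eq g hat hab tc, top_ub_eq g hat hab tc c hcb]

lemma top_absorb : ∀ y, tot lam' ≤ y → y < tot lam →
    0 ≤ ietMap pt pb lam y ∧ ietMap pt pb lam y < tot lam' := by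
  intro y hy1 hy2
  have hne := step_ne g hat hab
  have hwl : pb a < d := winner_lt g hat hab
  have hstot : tot lam' = tot lam - lam b := top_tot g hat hab tc
  have hut : utI pt lam a = tot lam - lam a := ut_last_eq g hat
  have hub : utI pb lam b = tot lam - lam b := ut_last_eq g.symm hab
  have hmem : utI pt lam a ≤ y ∧ y < utI pt lam a + lam a := by
    constructor
    · rw [hut]; linarith [tc.1, hstot]
    · rw [hut]; linarith
  have hm := ietMap_mem g hmem
  rw [ubI_eq_utI] at hm
  have hub_lt : utI pb lam a + lam a ≤ utI pb lam b :=
    utI_add_le_of_lt g.pos (by rw [hab]; exact hwl)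
  have hub_nn : 0 ≤ utI pb lam a := utI_nonneg g.pos a
  constructor
  · linarith [hm.1]
  · rw [hstot]; linarith [hm.2, hub_lt, hub]

end TopDyn

section BotDyn

variable (g : Good d pt pb lam) (hat : pt a = d) (hab : pb b = d)
  (bc : TopCase pb pt pb' pt' lam lam' b a)

include g hat hab bc

lemma bot_D1 : ietMap pt pb lam (utI pt' lam' a) = utI pt lam a := by
  have hne := step_ne g hat hab
  have hut : utI pt lam a = tot lam - lam a := ut_last_eq g hat
  have hub : utI pb lam b = tot lam - lam b := ut_last_eq g.symm hab
  have hloser : utI pt' lam' a = utI pt lam b + lam b - lam a :=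
    top_ub_loser g.symm hab hat bc
  have hmem : utI pt lam b ≤ utI pt' lam' a ∧
      utI pt' lam' a < utI pt lam b + lam b := by
    rw [hloser]
    constructor
    · linarith [bc.1]
    · linarith [g.pos a]
  rw [ietMap_apply g hmem, hloser, ubI_eq_utI, hut, hub]
  ring

lemma bot_dich : ∀ y, 0 ≤ y → y < tot lam' →
    (ietMap pt' pb' lam' y = ietMap pt pb lam y ∧
      0 ≤ ietMap pt pb lam y ∧ ietMap pt pb lam y < tot lam') ∨
    (ietMap pt' pb' lam' y = ietMap pt pb lam (ietMap pt pb lam y) ∧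
      tot lam' ≤ ietMap pt pb lam y ∧ ietMap pt pb lam y < tot lam ∧
      0 ≤ ietMap pt pb lam (ietMap pt pb lam y) ∧
      ietMap pt pb lam (ietMap pt pb lam y) < tot lam') := by
  intro y hy0 hys'
  have hne := step_ne g hat hab
  have hwl : pb a < d := winner_lt g hat hab
  have hwt : pt b < d := winner_lt g.symm hab hat
  have g' : Good d pt' pb' lam' := (top_good g.symm hab hat bc).symm
  have hstot : tot lam' = tot lam - lam a := top_tot g.symm hab hat bc
  have hut : utI pt lam a = tot lam - lam a := ut_last_eq g hat
  have hub : utI pb lam b = tot lam - lam b := ut_last_eq g.symm hab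
  have hloser : utI pt' lam' a = utI pt lam b + lam b - lam a :=
    top_ub_loser g.symm hab hat bc
  have hlama : lam' a = lam a := bc.2.2.2.2.2.2 a hne
  have hlamb : lam' b = lam b - lam a := bc.2.2.2.2.2.1
  have hubeq : ∀ z, utI pb' lam' z = utI pb lam z := fun z =>
    top_ut_eq g.symm hab hat bc z
  have hys : y < tot lam := by
    have := g.pos a
    linarith
  obtain ⟨c, hc⟩ := exists_interval g.tinj g.trng g.card g.pos hy0 hys
  have hTy := ietMap_apply g hc
  have hmem := ietMap_mem g hc
  rw [ubI_eq_utI] at hTy hmem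
  by_cases hca : c = a
  · exfalso
    subst hca
    rw [hut] at hc
    linarith [hc.1, hstot]
  by_cases hcb : c = b
  · subst hcb
    have hblt : utI pt lam c + lam c ≤ utI pt lam a :=
      utI_add_le_of_lt g.pos (by rw [hat]; exact hwt)
    by_cases hsplit : y < utI pt' lam' a
    · refine Or.inl ?_
      have hbnd2 : ietMap pt pb lam y < tot lam' := by
        rw [hTy, hstot]
        rw [hloser] at hsplit
        linarith [hub]
      refine ⟨?_, le_trans (utI_nonneg g.pos c) hmem.1, hbnd2⟩
      have hc' : utI pt' lam' c ≤ y ∧ y < utI pt' lam' c + lam' c := by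
        rw [top_ub_eq g.symm hab hat bc c hca, hlamb]
        refine ⟨hc.1, ?_⟩
        rw [hloser] at hsplit
        linarith
      have hT'y := ietMap_apply g' hc'
      rw [ubI_eq_utI] at hT'y
      rw [hT'y, hTy, top_ub_eq g.symm hab hat bc c hca, hubeq]
    · refine Or.inr ?_
      push_neg at hsplit
      have hTy1 : tot lam' ≤ ietMap pt pb lam y := by
        rw [hTy, hstot]
        rw [hloser] at hsplit
        linarith [hub]
      have hTy2 : ietMap pt pb lam y < tot lam := by
        rw [hTy]
        linarith [hc.2, hub]
      have hTmem : utI pt lam a ≤ ietMap pt pb lam y ∧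
          ietMap pt pb lam y < utI pt lam a + lam a := by
        rw [hut]
        constructor
        · linarith [hstot, hTy1]
        · linarith [hTy2]
      have hTT := ietMap_apply g hTmem
      have hTTmem := ietMap_mem g hTmem
      rw [ubI_eq_utI] at hTT hTTmem
      have hub_lt : utI pb lam a + lam a ≤ utI pb lam c :=
        utI_add_le_of_lt g.pos (by rw [hab]; exact hwl)
      have hub_nn : 0 ≤ utI pb lam a := utI_nonneg g.pos a
      refine ⟨?_, hTy1, hTy2, by linarith [hTTmem.1],
        by linarith [hTTmem.2, hub_lt, hub, bc.1, hstot]⟩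
      have hc' : utI pt' lam' a ≤ y ∧ y < utI pt' lam' a + lam' a := by
        rw [hloser, hlama]
        exact ⟨by linarith [hloser], by linarith [hc.2]⟩
      have hT'y := ietMap_apply g' hc'
      rw [ubI_eq_utI] at hT'y
      rw [hT'y, hTT, hTy, hloser, hubeq, hut, hub]
      ring
  · refine Or.inl ?_
    have hclt : pb c < pb b := by
      have h1 := (g.brng c).2
      have h2 : pb c ≠ d := fun hh => hcb (g.binj (hh.trans hab.symm))
      rw [hab]; omega
    have hble : utI pb lam c + lam c ≤ utI pb lam b := utI_add_le_of_lt g.pos hclt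
    have hbnd2 : ietMap pt pb lam y < tot lam' := by
      rw [hstot]
      linarith [hmem.2, hub, bc.1]
    refine ⟨?_, le_trans (utI_nonneg g.pos c) hmem.1, hbnd2⟩
    have hc' : utI pt' lam' c ≤ y ∧ y < utI pt' lam' c + lam' c := by
      rw [top_ub_eq g.symm hab hat bc c hca, bc.2.2.2.2.2.2 c hcb]
      exact hc
    have hT'y := ietMap_apply g' hc'
    rw [ubI_eq_utI] at hT'y
    rw [hT'y, hTy, top_ub_eq g.symm hab hat bc c hca, hubeq]

lemma bot_absorb : ∀ y, tot lam' ≤ y → y < tot lam →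
    0 ≤ ietMap pt pb lam y ∧ ietMap pt pb lam y < tot lam' := by
  intro y hy1 hy2
  have hne := step_ne g hat hab
  have hwl : pb a < d := winner_lt g hat hab
  have hstot : tot lam' = tot lam - lam a := top_tot g.symm hab hat bc
  have hut : utI pt lam a = tot lam - lam a := ut_last_eq g hat
  have hub : utI pb lam b = tot lam - lam b := ut_last_eq g.symm hab
  have hmem : utI pt lam a ≤ y ∧ y < utI pt lam a + lam a := by
    rw [hut]
    constructor
    · linarith [hstot]
    · linarith
  have hm := ietMap_mem g hmem
  rw [ubI_eq_utI] at hm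
  have hub_lt : utI pb lam a + lam a ≤ utI pb lam b :=
    utI_add_le_of_lt g.pos (by rw [hab]; exact hwl)
  have hub_nn : 0 ≤ utI pb lam a := utI_nonneg g.pos a
  constructor
  · linarith [hm.1]
  · rw [hstot]; linarith [hm.2, hub_lt, hub, bc.1]

end BotDyn

end Dyn

/-! ### Orbit projection under one induction step -/

lemma orbit_project {T T' : ℝ → ℝ} {s s' : ℝ}
    (hdi : ∀ y, 0 ≤ y → y < s' →
      (T' y = T y ∧ 0 ≤ T y ∧ T y < s') ∨
      (T' y = T (T y) ∧ s' ≤ T y ∧ T y < s ∧ 0 ≤ T (T y) ∧ T (T y) < s'))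
    (habs : ∀ y, s' ≤ y → y < s → 0 ≤ T y ∧ T y < s')
    {y : ℝ} (hy0 : 0 ≤ y) (hys' : y < s')
    (hamb : ∀ j : ℕ, 0 ≤ T^[j] y ∧ T^[j] y < s) :
    ∀ j : ℕ, T^[j] y < s' → ∃ r ≤ j, T'^[r] y = T^[j] y := by
  have key : ∀ j : ℕ, ∃ r ≤ j,
      ((T^[j] y < s') ∧ T'^[r] y = T^[j] y) ∨
      ((s' ≤ T^[j] y) ∧ T'^[r] y = T^[j + 1] y) := by
    intro j
    induction j with
    | zero => exact ⟨0, le_rfl, Or.inl ⟨hys', rfl⟩⟩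
    | succ j ih =>
      obtain ⟨r, hr, hc⟩ := ih
      rcases hc with ⟨hin, heq⟩ | ⟨hout, heq⟩
      · rcases hdi (T^[j] y) (hamb j).1 hin with ⟨h1, h2, h3⟩ | ⟨h1, h2, h3, h4, h5⟩
        · refine ⟨r + 1, by omega, Or.inl ⟨?_, ?_⟩⟩
          · rw [Function.iterate_succ_apply']; exact h3
          · rw [Function.iterate_succ_apply', heq, h1, Function.iterate_succ_apply']
        · refine ⟨r + 1, by omega, Or.inr ⟨?_, ?_⟩⟩
          · rw [Function.iterate_succ_apply']; exact h2
          · rw [Function.iterate_succ_apply', heq, h1]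
            rw [Function.iterate_succ_apply' T (j+1), Function.iterate_succ_apply']
      · have hj1 : T^[j+1] y < s' := by
          rw [Function.iterate_succ_apply']
          exact (habs _ hout (hamb j).2).2
        exact ⟨r, by omega, Or.inl ⟨hj1, heq⟩⟩
  intro j hj
  obtain ⟨r, hr, hc⟩ := key j
  rcases hc with ⟨_, heq⟩ | ⟨hout, _⟩
  · exact ⟨r, hr, heq⟩
  · linarith

section StepWrap

variable {d : ℕ} {pt pb pt' pb' : A → ℕ} {lam lam' : A → ℝ}

lemma step_good (g : Good d pt pb lam) (hs : IETStep d pt pb pt' pb' lam lam') :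
    Good d pt' pb' lam' := by
  obtain ⟨a, b, hat, hab, tc | bc⟩ := IETStep_iff.1 hs
  · exact top_good g hat hab tc
  · exact (top_good g.symm hab hat bc).symm

lemma step_tot_lt (g : Good d pt pb lam) (hs : IETStep d pt pb pt' pb' lam lam') :
    tot lam' < tot lam := by
  obtain ⟨a, b, hat, hab, tc | bc⟩ := IETStep_iff.1 hs
  · rw [top_tot g hat hab tc]; linarith [g.pos b]
  · rw [top_tot g.symm hab hat bc]; linarith [g.pos a]

lemma step_dich (g : Good d pt pb lam) (hs : IETStep d pt pb pt' pb' lam lam') :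
    ∀ y, 0 ≤ y → y < tot lam' →
    (ietMap pt' pb' lam' y = ietMap pt pb lam y ∧
      0 ≤ ietMap pt pb lam y ∧ ietMap pt pb lam y < tot lam') ∨
    (ietMap pt' pb' lam' y = ietMap pt pb lam (ietMap pt pb lam y) ∧
      tot lam' ≤ ietMap pt pb lam y ∧ ietMap pt pb lam y < tot lam ∧
      0 ≤ ietMap pt pb lam (ietMap pt pb lam y) ∧
      ietMap pt pb lam (ietMap pt pb lam y) < tot lam') := by
  obtain ⟨a, b, hat, hab, tc | bc⟩ := IETStep_iff.1 hs
  · exact top_dich g hat hab tc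
  · exact bot_dich g hat hab bc

lemma step_absorb (g : Good d pt pb lam) (hs : IETStep d pt pb pt' pb' lam lam') :
    ∀ y, tot lam' ≤ y → y < tot lam →
      0 ≤ ietMap pt pb lam y ∧ ietMap pt pb lam y < tot lam' := by
  obtain ⟨a, b, hat, hab, tc | bc⟩ := IETStep_iff.1 hs
  · exact top_absorb g hat hab tc
  · exact bot_absorb g hat hab bc

lemma step_project (g : Good d pt pb lam) (hs : IETStep d pt pb pt' pb' lam lam')
    {y : ℝ} (hy0 : 0 ≤ y) (hys' : y < tot lam') :
    ∀ j : ℕ, (ietMap pt pb lam)^[j] y < tot lam' →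
      ∃ r ≤ j, (ietMap pt' pb' lam')^[r] y = (ietMap pt pb lam)^[j] y :=
  orbit_project (step_dich g hs) (step_absorb g hs) hy0 hys'
    (ietMap_iterate_into g hy0 (lt_trans hys' (step_tot_lt g hs)))

end StepWrap

/-! ### Sequences of induction steps -/

section Seq

variable {d : ℕ} {pt pb : ℕ → A → ℕ} {L : ℕ → A → ℝ} {K : ℕ}

variable (hst : ∀ k, k < K → IETStep d (pt k) (pb k) (pt (k+1)) (pb (k+1)) (L k) (L (k+1)))
  (g0 : Good d (pt 0) (pb 0) (L 0))

include hst g0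

lemma seq_good : ∀ k, k ≤ K → Good d (pt k) (pb k) (L k) := by
  intro k
  induction k with
  | zero => intro _; exact g0
  | succ k ih =>
    intro hk
    exact step_good (ih (by omega)) (hst k (by omega))

lemma seq_pow : ∀ k, k ≤ K → ∀ (y : ℝ), 0 ≤ y → y < tot (L k) →
    ∃ N, 1 ≤ N ∧ ietMap (pt k) (pb k) (L k) y
      = (ietMap (pt 0) (pb 0) (L 0))^[N] y := by
  intro k
  induction k with
  | zero =>
    intro _ y hy0 hys
    exact ⟨1, le_rfl, (Function.iterate_one _).symm ▸ rfl⟩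
  | succ k ih =>
    intro hk y hy0 hys
    have gk := seq_good hst g0 k (by omega)
    have hlt := step_tot_lt gk (hst k (by omega))
    rcases step_dich gk (hst k (by omega)) y hy0 hys with ⟨h1, h2, h3⟩ | ⟨h1, h2, h3, h4, h5⟩
    · obtain ⟨N, hN1, hN2⟩ := ih (by omega) y hy0 (lt_trans hys hlt)
      exact ⟨N, hN1, by rw [h1, hN2]⟩
    · obtain ⟨N1, hN11, hN12⟩ := ih (by omega) y hy0 (lt_trans hys hlt)
      have hTy0 : (0:ℝ) ≤ ietMap (pt k) (pb k) (L k) y := by linarith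
      obtain ⟨N2, hN21, hN22⟩ := ih (by omega) (ietMap (pt k) (pb k) (L k) y) hTy0 h3
      refine ⟨N2 + N1, by omega, ?_⟩
      rw [h1, hN22, hN12, ← Function.iterate_add_apply]

lemma seq_tot_mono : ∀ {m n}, n ≤ K → m ≤ n → tot (L n) ≤ tot (L m) := by
  intro m n hK h
  induction n with
  | zero =>
    have : m = 0 := by omega
    subst this; exact le_rfl
  | succ n ih =>
    rcases Nat.lt_or_ge m (n+1) with h' | h'
    · have h1 := ih (by omega) (by omega)
      have h2 := step_tot_lt (seq_good hst g0 n (by omega)) (hst n (by omega))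
      linarith
    · have : m = n + 1 := by omega
      subst this; exact le_rfl

end Seq

/-! ### Tracking critical data across steps -/

section Track

variable {d : ℕ} {pt pb pt' pb' : A → ℕ} {lam lam' : A → ℝ}

lemma step_pb_one_iff (g : Good d pt pb lam) (hs : IETStep d pt pb pt' pb' lam lam') :
    ∀ z, pb' z = 1 ↔ pb z = 1 := by
  obtain ⟨a, b, hat, hab, tc | bc⟩ := IETStep_iff.1 hs
  · exact top_pb'_one_iff g hat hab tc
  · intro z; rw [bc.2.1]

lemma step_pt_one_iff (g : Good d pt pb lam) (hs : IETStep d pt pb pt' pb' lam lam') :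
    ∀ z, pt' z = 1 ↔ pt z = 1 := by
  obtain ⟨a, b, hat, hab, tc | bc⟩ := IETStep_iff.1 hs
  · intro z; rw [tc.2.1]
  · exact top_pb'_one_iff g.symm hab hat bc

lemma step_ub_track (g : Good d pt pb lam) (hs : IETStep d pt pb pt' pb' lam lam') :
    ∀ z, utI pb' lam' z = utI pb lam z ∨
      utI pb' lam' z = ietMap pt pb lam (utI pb lam z) := by
  obtain ⟨a, b, hat, hab, tc | bc⟩ := IETStep_iff.1 hs
  · intro z
    rcases eq_or_ne z b with rfl | hz
    · exact Or.inr (top_D1 g hat hab tc)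
    · exact Or.inl (top_ub_eq g hat hab tc z hz)
  · intro z
    exact Or.inl (top_ut_eq g.symm hab hat bc z)

lemma step_ut_track (g : Good d pt pb lam) (hs : IETStep d pt pb pt' pb' lam lam') :
    ∀ z, utI pt' lam' z = utI pt lam z ∨
      ietMap pt pb lam (utI pt' lam' z) = utI pt lam z := by
  obtain ⟨a, b, hat, hab, tc | bc⟩ := IETStep_iff.1 hs
  · intro z
    exact Or.inl (top_ut_eq g hat hab tc z)
  · intro z
    rcases eq_or_ne z a with rfl | hz
    · exact Or.inr (bot_D1 g hat hab bc)
    · exact Or.inl (top_ub_eq g.symm hab hat bc z hz)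

end Track

section SeqTrack

variable {d : ℕ} {pt pb : ℕ → A → ℕ} {L : ℕ → A → ℝ} {K : ℕ}

variable (hst : ∀ k, k < K → IETStep d (pt k) (pb k) (pt (k+1)) (pb (k+1)) (L k) (L (k+1)))
  (g0 : Good d (pt 0) (pb 0) (L 0))

include hst g0

lemma seq_pb_one : ∀ k, k ≤ K → ∀ z, (pb k z = 1 ↔ pb 0 z = 1) := by
  intro k
  induction k with
  | zero => intro _ z; exact Iff.rfl
  | succ k ih =>
    intro hk z
    rw [step_pb_one_iff (seq_good hst g0 k (by omega)) (hst k (by omega)) z,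
      ih (by omega) z]

lemma seq_pt_one : ∀ k, k ≤ K → ∀ z, (pt k z = 1 ↔ pt 0 z = 1) := by
  intro k
  induction k with
  | zero => intro _ z; exact Iff.rfl
  | succ k ih =>
    intro hk z
    rw [step_pt_one_iff (seq_good hst g0 k (by omega)) (hst k (by omega)) z,
      ih (by omega) z]

lemma seq_pb_two (k : ℕ) (hk : k ≤ K) (z : A) (h : 2 ≤ pb k z) : 2 ≤ pb 0 z := by
  have h1 := ((seq_good hst g0 k hk).brng z).1
  have h2 := (g0.brng z).1
  have h3 := (seq_pb_one hst g0 k hk z).not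
  simp only [not_iff_not] at h3
  omega

lemma seq_pt_two (k : ℕ) (hk : k ≤ K) (z : A) (h : 2 ≤ pt k z) : 2 ≤ pt 0 z := by
  have h1 := ((seq_good hst g0 k hk).trng z).1
  have h2 := (g0.trng z).1
  have h3 := (seq_pt_one hst g0 k hk z).not
  simp only [not_iff_not] at h3
  omega

lemma seq_ub_orbit : ∀ k, k ≤ K → ∀ z, ∃ i : ℕ,
    utI (pb k) (L k) z = (ietMap (pt 0) (pb 0) (L 0))^[i] (utI (pb 0) (L 0) z) := by
  intro k
  induction k with
  | zero => intro _ z; exact ⟨0, rfl⟩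
  | succ k ih =>
    intro hk z
    obtain ⟨i, hi⟩ := ih (by omega) z
    have gk := seq_good hst g0 k (by omega)
    rcases step_ub_track gk (hst k (by omega)) z with h | h
    · exact ⟨i, by rw [h, hi]⟩
    · have hu0 : (0:ℝ) ≤ utI (pb k) (L k) z := utI_nonneg gk.pos z
      have hus : utI (pb k) (L k) z < tot (L k) := by
        have := utI_add_le_tot (p := pb k) gk.pos z
        have := gk.pos z
        linarith
      obtain ⟨N, hN1, hN2⟩ := seq_pow hst g0 k (by omega) _ hu0 hus
      refine ⟨N + i, ?_⟩
      rw [h, hN2, hi, ← Function.iterate_add_apply]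

lemma seq_ut_orbit : ∀ k, k ≤ K → ∀ z, ∃ i : ℕ,
    (ietMap (pt 0) (pb 0) (L 0))^[i] (utI (pt k) (L k) z) = utI (pt 0) (L 0) z := by
  intro k
  induction k with
  | zero => intro _ z; exact ⟨0, rfl⟩
  | succ k ih =>
    intro hk z
    obtain ⟨i, hi⟩ := ih (by omega) z
    have gk := seq_good hst g0 k (by omega)
    have gk1 := seq_good hst g0 (k+1) hk
    rcases step_ut_track gk (hst k (by omega)) z with h | h
    · exact ⟨i, by rw [h, hi]⟩
    · have hu0 : (0:ℝ) ≤ utI (pt (k+1)) (L (k+1)) z := utI_nonneg gk1.pos z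
      have hus : utI (pt (k+1)) (L (k+1)) z < tot (L k) := by
        have h1 := utI_add_le_tot (p := pt (k+1)) gk1.pos z
        have h2 := gk1.pos z
        have h3 := step_tot_lt gk (hst k (by omega))
        linarith
      obtain ⟨N, hN1, hN2⟩ := seq_pow hst g0 k (by omega) _ hu0 hus
      refine ⟨i + N, ?_⟩
      rw [Function.iterate_add_apply, ← hN2, h, hi]

/-- If the induction is blocked at stage `k` (equal lengths of the two last
letters), then the original IET has a connection. -/
lemma blocked_connection (k : ℕ) (hk : k ≤ K) {a b : A}
    (hat : pt k a = d) (hab : pb k b = d)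
    (heq : L k a = L k b) :
    ∃ (b' a' : A) (n : ℕ), 2 ≤ pb 0 b' ∧ 2 ≤ pt 0 a' ∧
      (ietMap (pt 0) (pb 0) (L 0))^[n] (utI (pb 0) (L 0) b') = utI (pt 0) (L 0) a' := by
  have gk := seq_good hst g0 k hk
  have hd2 := g0.two
  have hcrit : utI (pt k) (L k) a = utI (pb k) (L k) b := by
    rw [ut_last_eq gk hat, ut_last_eq gk.symm hab, heq]
  obtain ⟨p, hp⟩ := seq_ut_orbit hst g0 k hk a
  obtain ⟨i, hi⟩ := seq_ub_orbit hst g0 k hk b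
  refine ⟨b, a, p + i, ?_, ?_, ?_⟩
  · exact seq_pb_two hst g0 k hk b (by omega)
  · exact seq_pt_two hst g0 k hk a (by omega)
  · rw [Function.iterate_add_apply, ← hi, ← hcrit, hp]

end SeqTrack

/-! ### Existence of one step when the last lengths differ -/

section Exists

variable {d : ℕ} {pt pb : A → ℕ} {lam : A → ℝ}

lemma step_exists (g : Good d pt pb lam) {a b : A} (hat : pt a = d) (hab : pb b = d)
    (hne : lam a ≠ lam b) :
    ∃ st' : (A → ℕ) × (A → ℕ) × (A → ℝ),
      IETStep d pt pb st'.1 st'.2.1 lam st'.2.2 := by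
  have hab' : a ≠ b := step_ne g hat hab
  have hwl : pb a < d := winner_lt g hat hab
  have hwt : pt b < d := winner_lt g.symm hab hat
  rcases lt_or_gt_of_ne hne with h | h
  · -- lam a < lam b : bottom case, winner b, loser a
    refine ⟨⟨fun x => if pt x ≤ pt b then pt x else if x = a then pt b + 1 else pt x + 1,
      pb, fun x => if x = b then lam b - lam a else lam x⟩, a, b, hat, hab, Or.inr ?_⟩
    refine ⟨h, rfl, ?_, ?_, ?_, ?_, ?_⟩
    · intro x hx; simp only; rw [if_pos hx]
    · simp only; rw [if_neg (by omega), if_pos trivial]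
    · intro x hx1 hx2; simp only; rw [if_neg (by omega), if_neg hx1]
    · simp only; rw [if_pos trivial]
    · intro x hx; simp only; rw [if_neg hx]
  · -- lam b < lam a : top case, winner a, loser b
    refine ⟨⟨pt, fun x => if pb x ≤ pb a then pb x else if x = b then pb a + 1 else pb x + 1,
      fun x => if x = a then lam a - lam b else lam x⟩, a, b, hat, hab, Or.inl ?_⟩
    refine ⟨h, rfl, ?_, ?_, ?_, ?_, ?_⟩
    · intro x hx; simp only; rw [if_pos hx]
    · simp only; rw [if_neg (by omega), if_pos trivial]
    · intro x hx1 hx2; simp only; rw [if_neg (by omega), if_neg hx1]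
    · simp only; rw [if_pos trivial]
    · intro x hx; simp only; rw [if_neg hx]

end Exists

/-! ### The deterministic induction machine; the easy direction -/

section Machine

variable {d : ℕ}

lemma good_init (h2 : 2 ≤ Fintype.card A) (pit pib : A → ℕ) (lam : A → ℝ)
    (hpit : Set.BijOn pit Set.univ (Set.Ico 1 (Fintype.card A + 1)))
    (hpib : Set.BijOn pib Set.univ (Set.Ico 1 (Fintype.card A + 1)))
    (hadm : ∀ k : ℕ, 1 ≤ k → k < Fintype.card A →
      {a : A | pit a ≤ k} ≠ {a : A | pib a ≤ k})
    (hpos : ∀ x, 0 < lam x) : Good (Fintype.card A) pit pib lam := by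
  refine ⟨rfl, h2, ?_, ?_, ?_, ?_, hpos, hadm⟩
  · exact Set.injOn_univ.1 hpit.injOn
  · exact Set.injOn_univ.1 hpib.injOn
  · intro a
    have := hpit.mapsTo (Set.mem_univ a)
    simp only [Set.mem_Ico] at this
    omega
  · intro a
    have := hpib.mapsTo (Set.mem_univ a)
    simp only [Set.mem_Ico] at this
    omega

open Classical in
noncomputable def nextState (d : ℕ) (st : (A → ℕ) × (A → ℕ) × (A → ℝ)) :
    (A → ℕ) × (A → ℕ) × (A → ℝ) :=
  if h : ∃ st' : (A → ℕ) × (A → ℕ) × (A → ℝ),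
      IETStep d st.1 st.2.1 st'.1 st'.2.1 st.2.2 st'.2.2 then h.choose else st

noncomputable def states (d : ℕ) (pit pib : A → ℕ) (lam : A → ℝ) :
    ℕ → (A → ℕ) × (A → ℕ) × (A → ℝ)
  | 0 => (pit, pib, lam)
  | (k+1) => nextState d (states d pit pib lam k)

lemma no_connection_admits (pit pib : A → ℕ) (lam : A → ℝ)
    (g0 : Good (Fintype.card A) pit pib lam)
    (hnc : ¬ HasConnection pit pib lam) :
    AdmitsAllSteps (Fintype.card A) pit pib lam := by
  set d := Fintype.card A with hd
  set S := states d pit pib lam with hS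
  have hS0 : S 0 = (pit, pib, lam) := rfl
  have main : ∀ k, IETStep d (S k).1 (S k).2.1 (S (k+1)).1 (S (k+1)).2.1
      (S k).2.2 (S (k+1)).2.2 := by
    intro k
    induction k using Nat.strong_induction_on with
    | _ k IH =>
      -- `Good` at stage `k` from the previous steps
      have gk : Good d (S k).1 (S k).2.1 (S k).2.2 := by
        have := seq_good (pt := fun j => (S j).1) (pb := fun j => (S j).2.1)
          (L := fun j => (S j).2.2) (K := k) (fun j hj => IH j hj) g0 k le_rfl
        exact this
      have h1d : 1 ≤ d := by have := g0.two; omega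
      obtain ⟨a, hat⟩ := psurj gk.tinj gk.trng gk.card h1d le_rfl
      obtain ⟨b, hab⟩ := psurj gk.binj gk.brng gk.card h1d le_rfl
      have hne : (S k).2.2 a ≠ (S k).2.2 b := by
        intro heq
        refine hnc ?_
        obtain ⟨b', a', n, hb', ha', horb⟩ := blocked_connection
          (pt := fun j => (S j).1) (pb := fun j => (S j).2.1)
          (L := fun j => (S j).2.2) (K := k) (fun j hj => IH j hj) g0 k le_rfl
          hat hab heq
        exact ⟨b', a', n, hb', ha', horb⟩
      obtain ⟨st', hstep'⟩ := step_exists gk hat hab hne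
      have hex : ∃ st' : (A → ℕ) × (A → ℕ) × (A → ℝ),
          IETStep d (S k).1 (S k).2.1 st'.1 st'.2.1 (S k).2.2 st'.2.2 := ⟨st', hstep'⟩
      have hSk : S (k+1) = hex.choose := by
        show nextState d (S k) = _
        rw [nextState]
        rw [dif_pos hex]
      rw [hSk]
      exact hex.choose_spec
  exact ⟨fun k => (S k).1, fun k => (S k).2.1, fun k => (S k).2.2, rfl, rfl, rfl, main⟩

end Machine

/-! ### The combinatorial machine with linear maps -/

section Linear

def elemMapSub (w l : A) : (A → ℝ) →ₗ[ℝ] (A → ℝ) where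
  toFun f := fun y => if y = w then f w - f l else f y
  map_add' f g := by
    funext y
    by_cases h : y = w <;> simp [h] <;> try ring
  map_smul' c f := by
    funext y
    by_cases h : y = w <;> simp [h] <;> try ring

def elemMapAdd (w l : A) : (A → ℝ) →ₗ[ℝ] (A → ℝ) where
  toFun f := fun y => if y = w then f w + f l else f y
  map_add' f g := by
    funext y
    by_cases h : y = w <;> simp [h] <;> try ring
  map_smul' c f := by
    funext y
    by_cases h : y = w <;> simp [h] <;> try ring

lemma elemMapSub_apply (w l : A) (f : A → ℝ) (y : A) :
    elemMapSub w l f y = if y = w then f w - f l else f y := rfl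

lemma elemMapAdd_apply (w l : A) (f : A → ℝ) (y : A) :
    elemMapAdd w l f y = if y = w then f w + f l else f y := rfl

noncomputable def elemEquiv (w l : A) (hne : w ≠ l) : (A → ℝ) ≃ₗ[ℝ] (A → ℝ) :=
  LinearEquiv.ofLinear (elemMapSub w l) (elemMapAdd w l)
    (by
      apply LinearMap.ext
      intro f
      funext y
      simp only [LinearMap.comp_apply, LinearMap.id_apply]
      rw [elemMapSub_apply]
      by_cases h : y = w
      · rw [if_pos h, elemMapAdd_apply, elemMapAdd_apply,
          if_pos rfl, if_neg (fun hh : l = w => hne hh.symm), h]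
        ring
      · rw [if_neg h, elemMapAdd_apply, if_neg h])
    (by
      apply LinearMap.ext
      intro f
      funext y
      simp only [LinearMap.comp_apply, LinearMap.id_apply]
      rw [elemMapAdd_apply]
      by_cases h : y = w
      · rw [if_pos h, elemMapSub_apply, elemMapSub_apply,
          if_pos rfl, if_neg (fun hh : l = w => hne hh.symm), h]
        ring
      · rw [if_neg h, elemMapSub_apply, if_neg h])

lemma elemEquiv_apply (w l : A) (hne : w ≠ l) (f : A → ℝ) (y : A) :
    elemEquiv w l hne f y = if y = w then f w - f l else f y := rfl

open Classical in
noncomputable def lastLetter [Nonempty A] (d : ℕ) (p : A → ℕ) : A :=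
  if h : ∃ a, p a = d then h.choose else Classical.arbitrary A

lemma lastLetter_spec [Nonempty A] {d : ℕ} {p : A → ℕ} (h : ∃ a, p a = d) :
    p (lastLetter d p) = d := by
  rw [lastLetter, dif_pos h]
  exact h.choose_spec

abbrev CSt (A : Type*) := (A → ℕ) × (A → ℕ) × ((A → ℝ) ≃ₗ[ℝ] (A → ℝ))

open Classical in
noncomputable def cstep [Nonempty A] (d : ℕ) (st : CSt A) (dir : Bool) : CSt A :=
  let a := lastLetter d st.1
  let b := lastLetter d st.2.1
  if hne : a ≠ b then
    if dir then
      (st.1,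
       fun x => if st.2.1 x ≤ st.2.1 a then st.2.1 x
         else if x = b then st.2.1 a + 1 else st.2.1 x + 1,
       st.2.2.trans (elemEquiv a b hne))
    else
      (fun x => if st.1 x ≤ st.1 b then st.1 x
         else if x = a then st.1 b + 1 else st.1 x + 1,
       st.2.1,
       st.2.2.trans (elemEquiv b a (Ne.symm hne)))
  else st

noncomputable def cword [Nonempty A] (d : ℕ) (pit pib : A → ℕ) (w : List Bool) : CSt A :=
  w.foldl (cstep d) (pit, pib, LinearEquiv.refl ℝ (A → ℝ))

lemma cword_nil [Nonempty A] (d : ℕ) (pit pib : A → ℕ) :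
    cword d pit pib [] = (pit, pib, LinearEquiv.refl ℝ (A → ℝ)) := rfl

lemma cword_concat [Nonempty A] (d : ℕ) (pit pib : A → ℕ) (w : List Bool) (c : Bool) :
    cword d pit pib (w ++ [c]) = cstep d (cword d pit pib w) c := by
  rw [cword, cword, List.foldl_append, List.foldl_cons, List.foldl_nil]

open Classical in
noncomputable def cfun [Nonempty A] (d : ℕ) (pit pib : A → ℕ) (w : List Bool) :
    (A → ℝ) →ₗ[ℝ] ℝ :=
  let st := cword d pit pib w
  let f : (A → ℝ) →ₗ[ℝ] ℝ :=
    ((LinearMap.proj (lastLetter d st.1) : ((A → ℝ) →ₗ[ℝ] ℝ))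
      - LinearMap.proj (lastLetter d st.2.1)).comp st.2.2.toLinearMap
  if f ≠ 0 then f else LinearMap.proj (Classical.arbitrary A)

lemma proj_ne_zero [Nonempty A] (a : A) :
    (LinearMap.proj (R := ℝ) (φ := fun _ : A => ℝ) a) ≠ 0 := by
  intro h0
  have h1 : (LinearMap.proj (R := ℝ) (φ := fun _ : A => ℝ) a) (Pi.single a 1) = 0 := by
    rw [h0]; rfl
  rw [LinearMap.proj_apply, Pi.single_eq_same] at h1
  exact one_ne_zero h1

lemma cfun_ne_zero [Nonempty A] (d : ℕ) (pit pib : A → ℕ) (w : List Bool) :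
    cfun d pit pib w ≠ 0 := by
  rw [cfun]
  split_ifs with h
  · exact h
  · exact proj_ne_zero _

lemma cfun_spec [Nonempty A] (d : ℕ) (pit pib : A → ℕ) (w : List Bool)
    (hne : lastLetter d (cword d pit pib w).1 ≠ lastLetter d (cword d pit pib w).2.1) :
    cfun d pit pib w =
      ((LinearMap.proj (lastLetter d (cword d pit pib w).1) : ((A → ℝ) →ₗ[ℝ] ℝ))
        - LinearMap.proj (lastLetter d (cword d pit pib w).2.1)).comp
        (cword d pit pib w).2.2.toLinearMap := by
  rw [cfun]
  set st := cword d pit pib w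
  set f : (A → ℝ) →ₗ[ℝ] ℝ :=
    ((LinearMap.proj (lastLetter d st.1) : ((A → ℝ) →ₗ[ℝ] ℝ))
      - LinearMap.proj (lastLetter d st.2.1)).comp st.2.2.toLinearMap with hf
  have hfne : f ≠ 0 := by
    intro h0
    have h1 : f (st.2.2.symm (Pi.single (lastLetter d st.1) 1)) = 0 := by rw [h0]; rfl
    rw [hf] at h1
    simp only [LinearMap.comp_apply, LinearEquiv.coe_toLinearMap,
      LinearEquiv.apply_symm_apply, LinearMap.sub_apply, LinearMap.proj_apply] at h1
    rw [Pi.single_eq_same, Pi.single_eq_of_ne (Ne.symm hne)] at h1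
    norm_num at h1
  rw [if_pos hfne]

end Linear

/-! ### Realizing the combinatorial machine on a given length vector -/

section Realize

variable [Nonempty A]

open Classical in
noncomputable def cdir (d : ℕ) (pit pib : A → ℕ) (lam : A → ℝ) (w : List Bool) : Bool :=
  let st := cword d pit pib w
  if st.2.2 lam (lastLetter d st.2.1) < st.2.2 lam (lastLetter d st.1) then true else false

noncomputable def wseq (d : ℕ) (pit pib : A → ℕ) (lam : A → ℝ) : ℕ → List Bool
  | 0 => []
  | (k+1) => wseq d pit pib lam k ++ [cdir d pit pib lam (wseq d pit pib lam k)]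

lemma cstep_realize (d : ℕ) (pit pib : A → ℕ) (lam : A → ℝ) (w : List Bool)
    (g : Good d (cword d pit pib w).1 (cword d pit pib w).2.1 ((cword d pit pib w).2.2 lam))
    (hS : cfun d pit pib w lam ≠ 0) :
    IETStep d (cword d pit pib w).1 (cword d pit pib w).2.1
      (cword d pit pib (w ++ [cdir d pit pib lam w])).1
      (cword d pit pib (w ++ [cdir d pit pib lam w])).2.1
      ((cword d pit pib w).2.2 lam)
      ((cword d pit pib (w ++ [cdir d pit pib lam w])).2.2 lam) := by
  rw [cword_concat]
  set st := cword d pit pib w with hst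
  set a := lastLetter d st.1 with ha
  set b := lastLetter d st.2.1 with hb
  have h1d : 1 ≤ d := by have := g.two; omega
  have hat : st.1 a = d := lastLetter_spec (psurj g.tinj g.trng g.card h1d le_rfl)
  have hab : st.2.1 b = d := lastLetter_spec (psurj g.binj g.brng g.card h1d le_rfl)
  have hne : a ≠ b := step_ne g hat hab
  have hlam : st.2.2 lam a ≠ st.2.2 lam b := by
    intro heq
    apply hS
    rw [cfun_spec d pit pib w hne]
    simp only [LinearMap.comp_apply, LinearEquiv.coe_toLinearMap, LinearMap.sub_apply,
      LinearMap.proj_apply]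
    rw [← hst, ← ha, ← hb]
    rw [heq]
    ring
  have hdirval : cdir d pit pib lam w
      = if st.2.2 lam b < st.2.2 lam a then true else false := rfl
  rcases lt_or_gt_of_ne hlam with hlt | hgt
  · -- bottom case: winner b, dir = false
    have hdir : cdir d pit pib lam w = false := by
      rw [hdirval, if_neg (not_lt.2 (le_of_lt hlt))]
    rw [hdir]
    have hcs : cstep d st false
        = (fun x => if st.1 x ≤ st.1 b then st.1 x
            else if x = a then st.1 b + 1 else st.1 x + 1,
           st.2.1, st.2.2.trans (elemEquiv b a (Ne.symm hne))) := by
      rw [cstep]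
      simp only [← ha, ← hb, dif_pos hne, Bool.false_eq_true, if_false]
    rw [hcs]
    refine ⟨a, b, hat, hab, Or.inr ⟨hlt, rfl, ?_, ?_, ?_, ?_, ?_⟩⟩
    · intro x hx; simp only; rw [if_pos hx]
    · have hbtlt : st.1 b < d := winner_lt g.symm hab hat
      simp only; rw [if_neg (by omega), if_pos trivial]
    · intro x hx1 hx2; simp only; rw [if_neg (by omega), if_neg hx1]
    · rw [LinearEquiv.trans_apply, elemEquiv_apply, if_pos rfl]
    · intro x hx
      rw [LinearEquiv.trans_apply, elemEquiv_apply, if_neg hx]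
  · -- top case: winner a, dir = true
    have hdir : cdir d pit pib lam w = true := by
      rw [hdirval, if_pos hgt]
    rw [hdir]
    have hcs : cstep d st true
        = (st.1,
           fun x => if st.2.1 x ≤ st.2.1 a then st.2.1 x
             else if x = b then st.2.1 a + 1 else st.2.1 x + 1,
           st.2.2.trans (elemEquiv a b hne)) := by
      rw [cstep]
      simp only [← ha, ← hb, dif_pos hne, if_true]
    rw [hcs]
    refine ⟨a, b, hat, hab, Or.inl ⟨hgt, rfl, ?_, ?_, ?_, ?_, ?_⟩⟩
    · intro x hx; simp only; rw [if_pos hx]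
    · have hwl : st.2.1 a < d := winner_lt g hat hab
      simp only; rw [if_neg (by omega), if_pos trivial]
    · intro x hx1 hx2; simp only; rw [if_neg (by omega), if_neg hx1]
    · rw [LinearEquiv.trans_apply, elemEquiv_apply, if_pos rfl]
    · intro x hx
      rw [LinearEquiv.trans_apply, elemEquiv_apply, if_neg hx]

lemma avoid_admits (pit pib : A → ℕ) (lam : A → ℝ)
    (g0 : Good (Fintype.card A) pit pib lam)
    (hS : ∀ w : List Bool, cfun (Fintype.card A) pit pib w lam ≠ 0) :
    AdmitsAllSteps (Fintype.card A) pit pib lam := by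
  set d := Fintype.card A with hd
  set W := wseq d pit pib lam with hW
  set ST := fun k => cword d pit pib (W k) with hST
  have hWsucc : ∀ k, W (k+1) = W k ++ [cdir d pit pib lam (W k)] := fun k => rfl
  have hlam0 : (ST 0).2.2 lam = lam := rfl
  have main : ∀ k, Good d (ST k).1 (ST k).2.1 ((ST k).2.2 lam) ∧
      IETStep d (ST k).1 (ST k).2.1 (ST (k+1)).1 (ST (k+1)).2.1
        ((ST k).2.2 lam) ((ST (k+1)).2.2 lam) := by
    have key : ∀ k, Good d (ST k).1 (ST k).2.1 ((ST k).2.2 lam) →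
        IETStep d (ST k).1 (ST k).2.1 (ST (k+1)).1 (ST (k+1)).2.1
          ((ST k).2.2 lam) ((ST (k+1)).2.2 lam) := by
      intro k gk
      exact cstep_realize d pit pib lam (W k) gk (hS (W k))
    intro k
    induction k with
    | zero => exact ⟨g0, key 0 g0⟩
    | succ k ih =>
      have hg := step_good ih.1 ih.2
      exact ⟨hg, key (k+1) hg⟩
  exact ⟨fun k => (ST k).1, fun k => (ST k).2.1, fun k => (ST k).2.2 lam,
    rfl, rfl, rfl, fun k => (main k).2⟩

open Classical in
noncomputable def Sfun (d : ℕ) (pit pib : A → ℕ) : ℕ → ((A → ℝ) →ₗ[ℝ] ℝ) := fun n =>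
  if h : ∃ w : List Bool, Encodable.encode w = n then cfun d pit pib h.choose
  else LinearMap.proj (Classical.arbitrary A)

lemma Sfun_ne_zero (d : ℕ) (pit pib : A → ℕ) : ∀ n, Sfun d pit pib n ≠ 0 := by
  intro n
  rw [Sfun]
  split_ifs with h
  · exact cfun_ne_zero d pit pib h.choose
  · exact proj_ne_zero _

lemma Sfun_encode (d : ℕ) (pit pib : A → ℕ) (w : List Bool) :
    Sfun d pit pib (Encodable.encode w) = cfun d pit pib w := by
  rw [Sfun]
  have hex : ∃ w' : List Bool, Encodable.encode w' = Encodable.encode w := ⟨w, rfl⟩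
  rw [dif_pos hex]
  congr 1
  exact Encodable.encode_injective hex.choose_spec

end Realize

/-! ### Transport of a connection through the induction -/

section Con

variable {d : ℕ} {pt pb : ℕ → A → ℕ} {L : ℕ → A → ℝ}

variable (hst : ∀ k, IETStep d (pt k) (pb k) (pt (k+1)) (pb (k+1)) (L k) (L (k+1)))
  (g0 : Good d (pt 0) (pb 0) (L 0))

/-- `ConAt β k δ m`: at level `k`, the `m`-th image of the critical value of `β`
is the critical point of `δ`. -/
def ConAt (β : A) (k : ℕ) (δ : A) (m : ℕ) : Prop :=
  2 ≤ pt k δ ∧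
    (ietMap (pt k) (pb k) (L k))^[m] (utI (pb k) (L k) β) = utI (pt k) (L k) δ

include hst g0

lemma seq_pb_two' (k : ℕ) (z : A) (h : 2 ≤ pb 0 z) : 2 ≤ pb k z := by
  have h1 := (((seq_good (K := k) (fun j _ => hst j) g0) k le_rfl).brng z).1
  have h2 := (g0.brng z).1
  have h3 := (seq_pb_one (K := k) (fun j _ => hst j) g0 k le_rfl z)
  omega

lemma con_step {β : A} (k : ℕ) (hβ2 : 2 ≤ pb 0 β) {δ : A} {m : ℕ}
    (h : ConAt (pt := pt) (pb := pb) (L := L) β k δ m) :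
    ∃ δ' m', m' ≤ m ∧ ConAt (pt := pt) (pb := pb) (L := L) β (k+1) δ' m' ∧
      (m' = m → δ' = δ ∧ utI (pt (k+1)) (L (k+1)) δ = utI (pt k) (L k) δ) := by
  obtain ⟨hδ2, horb⟩ := h
  have gk : Good d (pt k) (pb k) (L k) :=
    seq_good (K := k) (fun j _ => hst j) g0 k le_rfl
  have gk1 : Good d (pt (k+1)) (pb (k+1)) (L (k+1)) := step_good gk (hst k)
  have hβk : 2 ≤ pb k β := seq_pb_two' hst g0 k β hβ2
  obtain ⟨a, b, hat, hab, tc | bc⟩ := IETStep_iff.1 (hst k)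
  · -- top case
    have hne := step_ne gk hat hab
    have hwl : pb k a < d := winner_lt gk hat hab
    have hstot : tot (L (k+1)) = tot (L k) - L k b := top_tot gk hat hab tc
    have huta : utI (pt k) (L k) a = tot (L k) - L k a := ut_last_eq gk hat
    have hubb : utI (pb k) (L k) b = tot (L k) - L k b := ut_last_eq gk.symm hab
    have hutδlt : utI (pt k) (L k) δ < tot (L (k+1)) := by
      have h1 := ut_le_ut_last gk hat δ
      rw [hstot, huta] at *
      linarith [tc.1, h1]
    by_cases hβb : β = b
    · -- the source is the loser: the orbit is shifted by one
      subst hβb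
      have hm : m ≠ 0 := by
        intro hm0
        subst hm0
        simp only [Function.iterate_zero, id_eq] at horb
        rw [hubb] at horb
        rw [← horb] at hutδlt
        rw [hstot] at hutδlt
        linarith
      obtain ⟨m', rfl⟩ : ∃ m', m = m' + 1 := ⟨m - 1, by omega⟩
      have hD1 : utI (pb (k+1)) (L (k+1)) β
          = ietMap (pt k) (pb k) (L k) (utI (pb k) (L k) β) := top_D1 gk hat hab tc
      have hy1a : 0 ≤ utI (pb (k+1)) (L (k+1)) β := utI_nonneg gk1.pos β
      have hy1b : utI (pb (k+1)) (L (k+1)) β < tot (L (k+1)) := by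
        have := utI_add_le_tot (p := pb (k+1)) (lam := L (k+1)) gk1.pos β
        have := gk1.pos β
        linarith
      have horb' : (ietMap (pt k) (pb k) (L k))^[m'] (utI (pb (k+1)) (L (k+1)) β)
          = utI (pt k) (L k) δ := by
        rw [hD1, ← Function.iterate_succ_apply]
        exact horb
      obtain ⟨r, hr, hreq⟩ := step_project gk (hst k) hy1a hy1b m'
        (by rw [horb']; exact hutδlt)
      refine ⟨δ, r, by omega, ⟨?_, ?_⟩, by omega⟩
      · rw [tc.2.1]; exact hδ2
      · rw [hreq, horb', top_ut_eq gk hat hab tc δ]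
    · -- the source is untouched
      have hubβlt : utI (pb k) (L k) β < tot (L (k+1)) := by
        have h1 : pb k β < pb k b := by
          have h2 := (gk.brng β).2
          have h3 : pb k β ≠ d := fun hh => hβb (gk.binj (hh.trans hab.symm))
          rw [hab]; omega
        have h4 := utI_add_le_of_lt gk.pos h1
        have := gk.pos β
        rw [hstot]
        linarith [hubb]
      have hy0 : 0 ≤ utI (pb k) (L k) β := utI_nonneg gk.pos β
      obtain ⟨r, hr, hreq⟩ := step_project gk (hst k) hy0 hubβlt m
        (by rw [horb]; exact hutδlt)
      refine ⟨δ, r, hr, ⟨?_, ?_⟩, ?_⟩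
      · rw [tc.2.1]; exact hδ2
      · rw [top_ub_eq gk hat hab tc β hβb, hreq, horb, top_ut_eq gk hat hab tc δ]
      · intro _
        exact ⟨rfl, top_ut_eq gk hat hab tc δ⟩
  · -- bottom case
    have hne := step_ne gk hat hab
    have hwl : pb k a < d := winner_lt gk hat hab
    have hstot : tot (L (k+1)) = tot (L k) - L k a := top_tot gk.symm hab hat bc
    have huta : utI (pt k) (L k) a = tot (L k) - L k a := ut_last_eq gk hat
    have hubb : utI (pb k) (L k) b = tot (L k) - L k b := ut_last_eq gk.symm hab
    have hubβlt : utI (pb k) (L k) β < tot (L (k+1)) := by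
      rcases eq_or_ne β b with rfl | hβb
      · rw [hstot, hubb]; linarith [bc.1]
      · have h1 : pb k β < pb k b := by
          have h2 := (gk.brng β).2
          have h3 : pb k β ≠ d := fun hh => hβb (gk.binj (hh.trans hab.symm))
          rw [hab]; omega
        have h4 := utI_add_le_of_lt gk.pos h1
        have := gk.pos β
        rw [hstot]
        linarith [hubb, bc.1]
    have hy0 : 0 ≤ utI (pb k) (L k) β := utI_nonneg gk.pos β
    have hubeq : utI (pb (k+1)) (L (k+1)) β = utI (pb k) (L k) β :=
      top_ut_eq gk.symm hab hat bc β
    by_cases hδa : δ = a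
    · -- the target is the loser
      subst hδa
      have hm : m ≠ 0 := by
        intro hm0
        subst hm0
        simp only [Function.iterate_zero, id_eq] at horb
        rw [horb, huta, hstot] at hubβlt
        linarith
      obtain ⟨m', rfl⟩ : ∃ m', m = m' + 1 := ⟨m - 1, by omega⟩
      have hD1 : ietMap (pt k) (pb k) (L k) (utI (pt (k+1)) (L (k+1)) δ)
          = utI (pt k) (L k) δ := bot_D1 gk hat hab bc
      have hut'0 : 0 ≤ utI (pt (k+1)) (L (k+1)) δ := utI_nonneg gk1.pos δ
      have hut'lt : utI (pt (k+1)) (L (k+1)) δ < tot (L (k+1)) := by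
        have := utI_add_le_tot (p := pt (k+1)) (lam := L (k+1)) gk1.pos δ
        have := gk1.pos δ
        linarith
      -- T^[m'] (ub β) = ut' δ by injectivity
      have hinj : (ietMap (pt k) (pb k) (L k))^[m'] (utI (pb k) (L k) β)
          = utI (pt (k+1)) (L (k+1)) δ := by
        have hmem := ietMap_iterate_into gk hy0
          (lt_trans hubβlt (step_tot_lt gk (hst k))) m'
        refine ietMap_injOn gk hmem.1 hmem.2 hut'0
          (lt_trans hut'lt (step_tot_lt gk (hst k))) ?_
        rw [Function.iterate_succ_apply'] at horb
        rw [hD1]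
        exact horb
      obtain ⟨r, hr, hreq⟩ := step_project gk (hst k) hy0 hubβlt m'
        (by rw [hinj]; exact hut'lt)
      refine ⟨δ, r, by omega, ⟨?_, ?_⟩, by omega⟩
      · have h1 := bc.2.2.2.1
        have h2 := (gk.trng b).1
        omega
      · rw [hubeq, hreq, hinj]
    · -- the target is untouched
      have hutδlt : utI (pt k) (L k) δ < tot (L (k+1)) := by
        have h1 : pt k δ < pt k a := by
          have h2 := (gk.trng δ).2
          have h3 : pt k δ ≠ d := fun hh => hδa (gk.tinj (hh.trans hat.symm))
          rw [hat]; omega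
        have h4 := utI_add_le_of_lt gk.pos h1
        have := gk.pos δ
        rw [hstot]
        linarith [huta]
      obtain ⟨r, hr, hreq⟩ := step_project gk (hst k) hy0 hubβlt m
        (by rw [horb]; exact hutδlt)
      have hutδeq : utI (pt (k+1)) (L (k+1)) δ = utI (pt k) (L k) δ :=
        top_ub_eq gk.symm hab hat bc δ hδa
      refine ⟨δ, r, hr, ⟨?_, ?_⟩, ?_⟩
      · have h1 : 2 ≤ pt k δ := hδ2
        by_cases h2 : pt k δ ≤ pt k b
        · rw [bc.2.2.1 δ h2]; exact h1
        · rw [bc.2.2.2.2.1 δ hδa (by omega)]; omega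
      · rw [hubeq, hutδeq, hreq, horb]
      · intro _
        exact ⟨rfl, hutδeq⟩

/-- From a connection at level `0`, a uniform positive lower bound for the
lengths of the induction intervals. -/
lemma connection_lower_bound {β α : A} {n : ℕ}
    (hβ2 : 2 ≤ pb 0 β) (hα2 : 2 ≤ pt 0 α)
    (horb : (ietMap (pt 0) (pb 0) (L 0))^[n] (utI (pb 0) (L 0) β)
      = utI (pt 0) (L 0) α) :
    ∃ y : ℝ, 0 < y ∧ ∃ K : ℕ, ∀ k, K ≤ k → y < tot (L k) := by
  classical
  set Cset : ℕ → Set ℕ :=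
    fun k => {m | ∃ δ, ConAt (pt := pt) (pb := pb) (L := L) β k δ m} with hCset
  have hmem_intro : ∀ {k m δ}, ConAt (pt := pt) (pb := pb) (L := L) β k δ m →
      m ∈ Cset k := fun {k m δ} h => ⟨δ, h⟩
  have hmem_elim : ∀ {k m}, m ∈ Cset k →
      ∃ δ, ConAt (pt := pt) (pb := pb) (L := L) β k δ m := fun {k m} h => h
  have hne : ∀ k, (Cset k).Nonempty := by
    intro k
    induction k with
    | zero => exact ⟨n, hmem_intro ⟨hα2, horb⟩⟩
    | succ k ih =>
      obtain ⟨m, hm⟩ := ih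
      obtain ⟨δ, hδ⟩ := hmem_elim hm
      obtain ⟨δ', m', _, h2, _⟩ := con_step hst g0 k hβ2 hδ
      exact ⟨m', hmem_intro h2⟩
  set μ : ℕ → ℕ := fun k => sInf (Cset k) with hμ
  have hμmem : ∀ k, ∃ δ, ConAt (pt := pt) (pb := pb) (L := L) β k δ (μ k) :=
    fun k => hmem_elim (Nat.sInf_mem (hne k))
  have hμmono : ∀ k, μ (k+1) ≤ μ k := by
    intro k
    obtain ⟨δ, hδ⟩ := hμmem k
    obtain ⟨δ', m', hm', h2, _⟩ := con_step hst g0 k hβ2 hδ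
    exact le_trans (Nat.sInf_le (hmem_intro h2)) hm'
  -- μ is eventually constant
  have hstab : ∃ K, ∀ k, K ≤ k → μ k = μ K := by
    have hmono : ∀ m k, m ≤ k → μ k ≤ μ m := by
      intro m k hmk
      induction k with
      | zero =>
        have hm0 : m = 0 := by omega
        subst hm0
        exact le_rfl
      | succ k ih =>
        rcases Nat.lt_or_ge m (k+1) with h' | h'
        · exact le_trans (hμmono k) (ih (by omega))
        · have : m = k + 1 := by omega
          subst this; exact le_rfl
    by_contra hcon
    push_neg at hcon
    -- construct an infinite strictly decreasing sequence: impossible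
    have key : ∀ j K, μ K + j ≤ μ 0 → ∃ K', K ≤ K' ∧ μ K' + j + 1 ≤ μ 0 := by
      intro j K hj
      obtain ⟨k, hKk, hμk⟩ := hcon K
      have h1 : μ k ≤ μ K := hmono K k hKk
      have h2 : μ k < μ K := lt_of_le_of_ne h1 hμk
      have h3 : μ K ≤ μ 0 := hmono 0 K (by omega)
      exact ⟨k, hKk, by omega⟩
    have key2 : ∀ j, ∃ K, μ K + j ≤ μ 0 := by
      intro j
      induction j with
      | zero => exact ⟨0, by omega⟩
      | succ j ih =>
        obtain ⟨K, hK⟩ := ih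
        obtain ⟨K', _, hK'⟩ := key j K hK
        exact ⟨K', by omega⟩
      
    obtain ⟨K, hK⟩ := key2 (μ 0 + 1)
    omega
  obtain ⟨K, hK⟩ := hstab
  -- after stabilization, the witness letter is frozen and so is its critical point
  obtain ⟨δK, hδK⟩ := hμmem K
  set y := utI (pt K) (L K) δK with hy
  have hy0 : 0 < y := by
    have gK : Good d (pt K) (pb K) (L K) :=
      seq_good (K := K) (fun j _ => hst j) g0 K le_rfl
    exact utI_pos gK.tinj gK.trng gK.card gK.pos hδK.1
  have hfro : ∀ j, ∃ δ, ConAt (pt := pt) (pb := pb) (L := L) β (K+j) δ (μ K) ∧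
      utI (pt (K+j)) (L (K+j)) δ = y := by
    intro j
    induction j with
    | zero => exact ⟨δK, hδK, rfl⟩
    | succ j ih =>
      obtain ⟨δ, hδ1, hδ2⟩ := ih
      obtain ⟨δ', m', hm', h2, h3⟩ := con_step hst g0 (K+j) hβ2 hδ1
      have hμ1 : μ (K + j + 1) ≤ m' := Nat.sInf_le (hmem_intro h2)
      have hμ2 : μ (K + j + 1) = μ K := hK (K+j+1) (by omega)
      have hm'eq : m' = μ K := by omega
      obtain ⟨hδeq, hval⟩ := h3 hm'eq
      subst hδeq
      refine ⟨δ', ?_, ?_⟩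
      · rw [show K + (j+1) = K + j + 1 from rfl, ← hm'eq]; exact h2
      · rw [show K + (j+1) = K + j + 1 from rfl, hval, hδ2]
  refine ⟨y, hy0, K, ?_⟩
  intro k hk
  obtain ⟨δ, hδ1, hδ2⟩ := hfro (k - K)
  rw [show K + (k - K) = k by omega] at hδ1 hδ2
  have gk : Good d (pt k) (pb k) (L k) :=
    seq_good (K := k) (fun j _ => hst j) g0 k le_rfl
  have h1 := utI_add_le_tot (p := pt k) (lam := L k) gk.pos δ
  have h2 := gk.pos δ
  rw [hδ2] at h1
  linarith

end Con

/-! ### Generic helpers about infinitely-often and monotone sequences -/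

lemma io_or {P Q : ℕ → Prop} (h : ∀ K, ∃ k, K ≤ k ∧ (P k ∨ Q k)) :
    (∀ K, ∃ k, K ≤ k ∧ P k) ∨ (∀ K, ∃ k, K ≤ k ∧ Q k) := by
  by_contra hc
  push_neg at hc
  obtain ⟨⟨K1, hK1⟩, ⟨K2, hK2⟩⟩ := hc
  obtain ⟨k, hk, hPQ⟩ := h (max K1 K2)
  rcases hPQ with hP | hQ
  · exact hK1 k (le_trans (le_max_left _ _) hk) hP
  · exact hK2 k (le_trans (le_max_right _ _) hk) hQ

lemma io_finset {P : ℕ → Prop} (h : ∀ K, ∃ k, K ≤ k ∧ P k) (n : ℕ) :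
    ∃ F : Finset ℕ, F.card = n ∧ ∀ j ∈ F, P j := by
  induction n with
  | zero => exact ⟨∅, rfl, by simp⟩
  | succ n ih =>
    obtain ⟨F, hcard, hF⟩ := ih
    obtain ⟨N, hN⟩ := F.exists_nat_subset_range
    obtain ⟨k, hk, hPk⟩ := h N
    have hknot : k ∉ F := by
      intro hmem
      have := hN hmem
      rw [Finset.mem_range] at this
      omega
    refine ⟨insert k F, ?_, ?_⟩
    · rw [Finset.card_insert_of_notMem hknot, hcard]
    · intro j hj
      rcases Finset.mem_insert.1 hj with rfl | hj
      · exact hPk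
      · exact hF j hj

lemma nat_mono_ev_const : ∀ (B : ℕ) (f : ℕ → ℕ), (∀ k, f k ≤ f (k+1)) →
    (∀ k, f k ≤ B) → ∃ K, ∀ k, K ≤ k → f k = f K := by
  intro B
  induction B with
  | zero =>
    intro f hm hb
    exact ⟨0, fun k _ => by have h1 := hb k; have h2 := hb 0; omega⟩
  | succ B ih =>
    intro f hm hb
    have hmono : ∀ m n, m ≤ n → f m ≤ f n := by
      intro m n hmn
      induction n with
      | zero =>
        have hm0 : m = 0 := by omega
        subst hm0
        exact le_rfl
      | succ n ihn =>
        rcases Nat.lt_or_ge m (n+1) with h' | h'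
        · exact le_trans (ihn (by omega)) (hm n)
        · have : m = n + 1 := by omega
          subst this
          exact le_rfl
    by_cases h : ∃ k, f k = B + 1
    · obtain ⟨k0, hk0⟩ := h
      refine ⟨k0, fun k hk => ?_⟩
      have h1 := hmono k0 k hk
      have h2 := hb k
      omega
    · push_neg at h
      exact ih f hm (fun k => by have h1 := hb k; have h2 := h k; omega)

/-! ### An admissible induction has intervals shrinking to zero -/

lemma no_lower_bound {d : ℕ} {pt pb : ℕ → A → ℕ} {L : ℕ → A → ℝ}
    (hst : ∀ k, IETStep d (pt k) (pb k) (pt (k+1)) (pb (k+1)) (L k) (L (k+1)))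
    (g0 : Good d (pt 0) (pb 0) (L 0))
    {y : ℝ} (hy : 0 < y) {K0 : ℕ} (hbd : ∀ k, K0 ≤ k → y < tot (L k)) : False := by
  classical
  have gk : ∀ k, Good d (pt k) (pb k) (L k) := fun k =>
    seq_good (K := k) (fun j _ => hst j) g0 k le_rfl
  choose att abt hat hab hcase using fun k => IETStep_iff.1 (hst k)
  set IT : ℕ → Prop := fun k =>
    TopCase (pt k) (pb k) (pt (k+1)) (pb (k+1)) (L k) (L (k+1)) (att k) (abt k) with hITdef
  set IB : ℕ → Prop := fun k =>
    TopCase (pb k) (pt k) (pb (k+1)) (pt (k+1)) (L k) (L (k+1)) (abt k) (att k) with hIBdef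
  have hcase' : ∀ k, IT k ∨ IB k := hcase
  have h_ne : ∀ k, att k ≠ abt k := fun k => step_ne (gk k) (hat k) (hab k)
  haveI hAne : Nonempty A := by
    have h2 : 2 ≤ Fintype.card A := by rw [g0.card]; exact g0.two
    exact Fintype.card_pos_iff.1 (by omega)
  -- basic monotonicity of lengths
  have hlam_step : ∀ k z, L (k+1) z ≤ L k z := by
    intro k z
    rcases hcase' k with tc | bc
    · rcases eq_or_ne z (att k) with rfl | hz
      · rw [tc.2.2.2.2.2.1]
        have := ((gk k).pos (abt k))
        linarith
      · rw [tc.2.2.2.2.2.2 z hz]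
    · rcases eq_or_ne z (abt k) with rfl | hz
      · rw [bc.2.2.2.2.2.1]
        have := ((gk k).pos (att k))
        linarith
      · rw [bc.2.2.2.2.2.2 z hz]
  have hlam_mono : ∀ (z : A) (m n : ℕ), m ≤ n → L n z ≤ L m z := by
    intro z m n hmn
    induction n with
    | zero =>
      have hm0 : m = 0 := by omega
      subst hm0
      exact le_rfl
    | succ n ihn =>
      rcases Nat.lt_or_ge m (n+1) with h' | h'
      · exact le_trans (hlam_step n z) (ihn (by omega))
      · have heq : m = n + 1 := by omega
        subst heq
        exact le_rfl
  have hwin_eq : ∀ k z, ¬((IT k ∧ z = att k) ∨ (IB k ∧ z = abt k)) →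
      L (k+1) z = L k z := by
    intro k z hz
    push_neg at hz
    rcases hcase' k with tc | bc
    · exact tc.2.2.2.2.2.2 z (hz.1 tc)
    · exact bc.2.2.2.2.2.2 z (hz.2 bc)
  have hloss_top : ∀ k, IT k → tot (L (k+1)) = tot (L k) - L k (abt k) :=
    fun k tc => top_tot (gk k) (hat k) (hab k) tc
  have hloss_bot : ∀ k, IB k → tot (L (k+1)) = tot (L k) - L k (att k) :=
    fun k bc => top_tot (gk k).symm (hab k) (hat k) bc
  have htot_nonneg : ∀ k, 0 ≤ tot (L k) :=
    fun k => Finset.sum_nonneg fun z _ => ((gk k).pos z).le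
  -- bound on the sum of all losses
  have hsum_range : ∀ N, ∑ j ∈ Finset.range N, (tot (L j) - tot (L (j+1)))
      = tot (L 0) - tot (L N) := by
    intro N
    induction N with
    | zero => simp
    | succ N ih => rw [Finset.sum_range_succ, ih]; ring
  have hsum_bound : ∀ F : Finset ℕ,
      (∑ j ∈ F, (tot (L j) - tot (L (j+1)))) ≤ tot (L 0) := by
    intro F
    obtain ⟨N, hN⟩ := F.exists_nat_subset_range
    calc ∑ j ∈ F, (tot (L j) - tot (L (j+1)))
        ≤ ∑ j ∈ Finset.range N, (tot (L j) - tot (L (j+1))) := by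
          refine Finset.sum_le_sum_of_subset_of_nonneg hN fun j _ _ => ?_
          have := step_tot_lt (gk j) (hst j)
          linarith
      _ = tot (L 0) - tot (L N) := hsum_range N
      _ ≤ tot (L 0) := by linarith [htot_nonneg N]
  -- losses tend to zero
  have hloss_small : ∀ ε : ℝ, 0 < ε → ∃ K, ∀ k, K ≤ k →
      tot (L k) - tot (L (k+1)) < ε := by
    intro ε hε
    by_contra hcon
    push_neg at hcon
    have hio : ∀ K, ∃ k, K ≤ k ∧ ε ≤ tot (L k) - tot (L (k+1)) := by
      intro K
      obtain ⟨k, hk1, hk2⟩ := hcon K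
      exact ⟨k, hk1, hk2⟩
    obtain ⟨n, hn⟩ := exists_nat_gt (tot (L 0) / ε)
    obtain ⟨F, hFcard, hF⟩ := io_finset hio n
    have h1 : (F.card : ℝ) • ε ≤ ∑ j ∈ F, (tot (L j) - tot (L (j+1))) := by
      calc (F.card : ℝ) • ε = ∑ _j ∈ F, ε := by rw [Finset.sum_const]; simp
        _ ≤ _ := Finset.sum_le_sum fun j hj => hF j hj
    rw [hFcard] at h1
    have h2 := hsum_bound F
    have h3 : tot (L 0) < n * ε := by
      rw [div_lt_iff₀ hε] at hn
      linarith
    rw [smul_eq_mul] at h1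
    linarith
  -- losing infinitely often forces the length to zero
  set LS : A → ℕ → Prop := fun z k =>
    (IT k ∧ z = abt k) ∨ (IB k ∧ z = att k) with hLSdef
  set WS : A → ℕ → Prop := fun z k =>
    (IT k ∧ z = att k) ∨ (IB k ∧ z = abt k) with hWSdef
  have hloss_eq : ∀ k z, LS z k → tot (L k) - tot (L (k+1)) = L k z := by
    intro k z hz
    rcases hz with ⟨tc, rfl⟩ | ⟨bc, rfl⟩
    · rw [hloss_top k tc]; ring
    · rw [hloss_bot k bc]; ring
  have hlose_small : ∀ z, (∀ K, ∃ k, K ≤ k ∧ LS z k) →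
      ∀ ε : ℝ, 0 < ε → ∃ K, ∀ k, K ≤ k → L k z < ε := by
    intro z hio ε hε
    obtain ⟨K1, hK1⟩ := hloss_small ε hε
    obtain ⟨k, hk1, hk2⟩ := hio K1
    refine ⟨k, fun k' hk' => ?_⟩
    have h1 : L k z < ε := by
      rw [← hloss_eq k z hk2]
      exact hK1 k hk1
    exact lt_of_le_of_lt (hlam_mono z k k' hk') h1
  -- both types of steps occur infinitely often
  have hio_bot : ∀ K, ∃ k, K ≤ k ∧ IB k := by
    by_contra hcon
    push_neg at hcon
    obtain ⟨K, hK⟩ := hcon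
    have hIT : ∀ k, K ≤ k → IT k := fun k hk => (hcase' k).resolve_right (hK k hk)
    have hptf : ∀ m, pt (K+m) = pt K := by
      intro m
      induction m with
      | zero => rfl
      | succ m ihm =>
        rw [show K + (m+1) = (K+m) + 1 from rfl, (hIT (K+m) (by omega)).2.1, ihm]
    have hattf : ∀ m, att (K+m) = att K := by
      intro m
      apply (gk (K+m)).tinj
      rw [hat (K+m), hptf m]
      exact (hat K).symm
    have hlamf : ∀ m z, z ≠ att K → L (K+m) z = L K z := by
      intro m z hz
      induction m with
      | zero => rfl
      | succ m ihm =>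
        rw [show K + (m+1) = (K+m) + 1 from rfl, hwin_eq (K+m) z ?_, ihm]
        intro hws
        rcases hws with ⟨_, h2⟩ | ⟨h1, _⟩
        · rw [hattf m] at h2
          exact hz h2
        · exact hK (K+m) (by omega) h1
    have hen : (Finset.univ.erase (att K)).Nonempty := by
      have hc : 2 ≤ Fintype.card A := by rw [g0.card]; exact g0.two
      rw [← Finset.card_pos, Finset.card_erase_of_mem (Finset.mem_univ _), Finset.card_univ]
      omega
    obtain ⟨z0, hz0mem, hz0min⟩ := Finset.exists_min_image _ (L K) hen
    have hε : 0 < L K z0 := (gk K).pos z0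
    obtain ⟨K1, hK1⟩ := hloss_small (L K z0) hε
    set k := max K K1 with hk
    obtain ⟨m, hm⟩ : ∃ m, k = K + m := ⟨k - K, by omega⟩
    have h1 : tot (L k) - tot (L (k+1)) = L k (abt k) :=
      hloss_eq k (abt k) (Or.inl ⟨hIT k (le_max_left _ _), rfl⟩)
    have h2 : L k (abt k) = L K (abt k) := by
      rw [hm]
      refine hlamf m (abt (K+m)) ?_
      rw [← hattf m]
      exact (h_ne (K+m)).symm
    have h3 : L K z0 ≤ L K (abt k) := by
      refine hz0min (abt k) (Finset.mem_erase.2 ⟨?_, Finset.mem_univ _⟩)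
      rw [hm, ← hattf m]
      exact (h_ne (K+m)).symm
    have h4 := hK1 k (le_max_right _ _)
    linarith
  have hio_top : ∀ K, ∃ k, K ≤ k ∧ IT k := by
    by_contra hcon
    push_neg at hcon
    obtain ⟨K, hK⟩ := hcon
    have hIB : ∀ k, K ≤ k → IB k := fun k hk => (hcase' k).resolve_left (hK k hk)
    have hpbf : ∀ m, pb (K+m) = pb K := by
      intro m
      induction m with
      | zero => rfl
      | succ m ihm =>
        rw [show K + (m+1) = (K+m) + 1 from rfl, (hIB (K+m) (by omega)).2.1, ihm]
    have habf : ∀ m, abt (K+m) = abt K := by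
      intro m
      apply (gk (K+m)).binj
      rw [hab (K+m), hpbf m]
      exact (hab K).symm
    have hlamf : ∀ m z, z ≠ abt K → L (K+m) z = L K z := by
      intro m z hz
      induction m with
      | zero => rfl
      | succ m ihm =>
        rw [show K + (m+1) = (K+m) + 1 from rfl, hwin_eq (K+m) z ?_, ihm]
        intro hws
        rcases hws with ⟨h1, _⟩ | ⟨_, h2⟩
        · exact hK (K+m) (by omega) h1
        · rw [habf m] at h2
          exact hz h2
    have hen : (Finset.univ.erase (abt K)).Nonempty := by
      have hc : 2 ≤ Fintype.card A := by rw [g0.card]; exact g0.two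
      rw [← Finset.card_pos, Finset.card_erase_of_mem (Finset.mem_univ _), Finset.card_univ]
      omega
    obtain ⟨z0, hz0mem, hz0min⟩ := Finset.exists_min_image _ (L K) hen
    have hε : 0 < L K z0 := (gk K).pos z0
    obtain ⟨K1, hK1⟩ := hloss_small (L K z0) hε
    set k := max K K1 with hk
    obtain ⟨m, hm⟩ : ∃ m, k = K + m := ⟨k - K, by omega⟩
    have h1 : tot (L k) - tot (L (k+1)) = L k (att k) :=
      hloss_eq k (att k) (Or.inr ⟨hIB k (le_max_left _ _), rfl⟩)
    have h2 : L k (att k) = L K (att k) := by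
      rw [hm]
      refine hlamf m (att (K+m)) ?_
      rw [← habf m]
      exact h_ne (K+m)
    have h3 : L K z0 ≤ L K (att k) := by
      refine hz0min (att k) (Finset.mem_erase.2 ⟨?_, Finset.mem_univ _⟩)
      rw [hm, ← habf m]
      exact h_ne (K+m)
    have h4 := hK1 k (le_max_right _ _)
    linarith
  -- winning infinitely often forces losing infinitely often
  have hws_io_ls : ∀ z, (∀ K, ∃ k, K ≤ k ∧ WS z k) → (∀ K, ∃ k, K ≤ k ∧ LS z k) := by
    intro z hws K
    obtain ⟨k, hKk, hwk⟩ := hws K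
    rcases hwk with ⟨hITk, hz⟩ | ⟨hIBk, hz⟩
    · have hPex : ∃ j, k ≤ j ∧ IB j := hio_bot k
      have hk'1 := (Nat.find_spec hPex).1
      have hk'2 := (Nat.find_spec hPex).2
      set k' := Nat.find hPex with hk'def
      have hmin : ∀ j, j < k' → ¬(k ≤ j ∧ IB j) := fun j hj => Nat.find_min hPex hj
      have hfro : ∀ m, k + m ≤ k' → pt (k + m) = pt k := by
        intro m
        induction m with
        | zero => intro _; rfl
        | succ m ihm =>
          intro hmk
          have h1 : ¬ IB (k+m) := fun hb => hmin (k+m) (by omega) ⟨by omega, hb⟩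
          have h2 : IT (k+m) := (hcase' (k+m)).resolve_right h1
          rw [show k + (m+1) = (k+m)+1 from rfl, h2.2.1, ihm (by omega)]
      have hattk' : att k' = att k := by
        apply (gk k').tinj
        rw [hat k']
        have hpteq : pt k' = pt k := by
          have h5 := hfro (k' - k) (by omega)
          rw [show k + (k' - k) = k' by omega] at h5
          exact h5
        rw [hpteq, hat k]
      refine ⟨k', by omega, Or.inr ⟨hk'2, ?_⟩⟩
      rw [hattk']
      exact hz
    · have hPex : ∃ j, k ≤ j ∧ IT j := hio_top k
      have hk'1 := (Nat.find_spec hPex).1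
      have hk'2 := (Nat.find_spec hPex).2
      set k' := Nat.find hPex with hk'def
      have hmin : ∀ j, j < k' → ¬(k ≤ j ∧ IT j) := fun j hj => Nat.find_min hPex hj
      have hfro : ∀ m, k + m ≤ k' → pb (k + m) = pb k := by
        intro m
        induction m with
        | zero => intro _; rfl
        | succ m ihm =>
          intro hmk
          have h1 : ¬ IT (k+m) := fun hb => hmin (k+m) (by omega) ⟨by omega, hb⟩
          have h2 : IB (k+m) := (hcase' (k+m)).resolve_left h1
          rw [show k + (m+1) = (k+m)+1 from rfl, h2.2.1, ihm (by omega)]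
      have habk' : abt k' = abt k := by
        apply (gk k').binj
        rw [hab k']
        have hpbeq : pb k' = pb k := by
          have h5 := hfro (k' - k) (by omega)
          rw [show k + (k' - k) = k' by omega] at h5
          exact h5
        rw [hpbeq, hab k]
      refine ⟨k', by omega, Or.inl ⟨hk'2, ?_⟩⟩
      rw [habk']
      exact hz
  have hls_io_ws : ∀ z, (∀ K, ∃ k, K ≤ k ∧ LS z k) → (∀ K, ∃ k, K ≤ k ∧ WS z k) := by
    intro z hls
    by_contra hcon
    push_neg at hcon
    obtain ⟨K, hK⟩ := hcon
    have hfro : ∀ k, K ≤ k → L k z = L K z := by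
      intro k hk
      obtain ⟨m, rfl⟩ : ∃ m, k = K + m := ⟨k - K, by omega⟩
      clear hk
      induction m with
      | zero => rfl
      | succ m ihm =>
        rw [show K + (m+1) = (K+m) + 1 from rfl, hwin_eq (K+m) z ?_, ihm]
        intro hws
        refine hK (K+m) (by omega) ?_
        rcases hws with ⟨h1, h2⟩ | ⟨h1, h2⟩
        · exact Or.inl ⟨h1, h2⟩
        · exact Or.inr ⟨h1, h2⟩
    have hc := (gk K).pos z
    obtain ⟨K1, hK1⟩ := hlose_small z hls (L K z) hc
    obtain ⟨k, hk1, hk2⟩ := hls (max K K1)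
    have h1 := hK1 k (le_trans (le_max_right _ _) hk1)
    have h2 := hfro k (le_trans (le_max_left _ _) hk1)
    linarith
  have hact_small : ∀ z, (∀ K, ∃ k, K ≤ k ∧ (z = att k ∨ z = abt k)) →
      ∀ ε : ℝ, 0 < ε → ∃ K, ∀ k, K ≤ k → L k z < ε := by
    intro z hio
    have hio2 : ∀ K, ∃ k, K ≤ k ∧ (WS z k ∨ LS z k) := by
      intro K
      obtain ⟨k, hk1, hk2⟩ := hio K
      refine ⟨k, hk1, ?_⟩
      rcases hk2 with h | h
      · rcases hcase' k with tc | bc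
        · exact Or.inl (Or.inl ⟨tc, h⟩)
        · exact Or.inr (Or.inr ⟨bc, h⟩)
      · rcases hcase' k with tc | bc
        · exact Or.inr (Or.inl ⟨tc, h⟩)
        · exact Or.inl (Or.inr ⟨bc, h⟩)
    rcases io_or hio2 with hws | hls
    · exact hlose_small z (hws_io_ls z hws)
    · exact hlose_small z hls
  -- there is a passive letter
  have hpassive : ∃ z, ¬ (∀ K, ∃ k, K ≤ k ∧ (z = att k ∨ z = abt k)) := by
    by_contra hcon
    push_neg at hcon
    have hcard : 0 < (Fintype.card A : ℝ) := by
      have h2 : 2 ≤ Fintype.card A := by rw [g0.card]; exact g0.two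
      exact_mod_cast Nat.pos_of_ne_zero (by omega)
    set ε := y / (Fintype.card A) with hεdef
    have hεpos : 0 < ε := div_pos hy hcard
    have hall : ∀ z, ∃ K, ∀ k, K ≤ k → L k z < ε := fun z =>
      hact_small z (hcon z) ε hεpos
    choose Kf hKf using hall
    set Km := max K0 (Finset.univ.sup Kf) with hKm
    have h1 : tot (L Km) < ∑ _z : A, ε := by
      refine Finset.sum_lt_sum_of_nonempty Finset.univ_nonempty fun z _ => ?_
      exact hKf z Km (le_trans (Finset.le_sup (Finset.mem_univ z)) (le_max_right _ _))
    rw [Finset.sum_const, Finset.card_univ, nsmul_eq_mul] at h1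
    have h2 : (Fintype.card A : ℝ) * ε = y := by
      rw [hεdef]
      field_simp
    have h3 := hbd Km (le_max_left _ _)
    linarith
  -- passive letters have eventually frozen positions
  have hfrozen : ∀ z, ∃ Kz, (¬ (∀ K, ∃ k, K ≤ k ∧ (z = att k ∨ z = abt k))) →
      ∀ k, Kz ≤ k → (z ≠ att k ∧ z ≠ abt k) ∧ pt k z = pt Kz z ∧ pb k z = pb Kz z := by
    intro z
    by_cases hz : ∀ K, ∃ k, K ≤ k ∧ (z = att k ∨ z = abt k)
    · exact ⟨0, fun hc => absurd hz hc⟩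
    · push_neg at hz
      obtain ⟨K1, hK1⟩ := hz
      have hmono_t : ∀ m, pt (K1 + m) z ≤ pt (K1 + m + 1) z := by
        intro m
        have hz1 : z ≠ att (K1+m) := (hK1 (K1+m) (by omega)).1
        rcases hcase' (K1+m) with tc | bc
        · rw [tc.2.1]
        · by_cases h2 : pt (K1+m) z ≤ pt (K1+m) (abt (K1+m))
          · rw [bc.2.2.1 z h2]
          · rw [bc.2.2.2.2.1 z hz1 (by omega)]
            omega
      have hmono_b : ∀ m, pb (K1 + m) z ≤ pb (K1 + m + 1) z := by
        intro m
        have hz1 : z ≠ abt (K1+m) := (hK1 (K1+m) (by omega)).2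
        rcases hcase' (K1+m) with tc | bc
        · by_cases h2 : pb (K1+m) z ≤ pb (K1+m) (att (K1+m))
          · rw [tc.2.2.1 z h2]
          · rw [tc.2.2.2.2.1 z hz1 (by omega)]
            omega
        · rw [bc.2.1]
      obtain ⟨Mt, hMt⟩ := nat_mono_ev_const d (fun m => pt (K1+m) z) hmono_t
        (fun m => ((gk (K1+m)).trng z).2)
      obtain ⟨Mb, hMb⟩ := nat_mono_ev_const d (fun m => pb (K1+m) z) hmono_b
        (fun m => ((gk (K1+m)).brng z).2)
      refine ⟨K1 + max Mt Mb, fun _ k hk => ⟨⟨?_, ?_⟩, ?_, ?_⟩⟩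
      · exact (hK1 k (by omega)).1
      · exact (hK1 k (by omega)).2
      · have e1 := hMt (k - K1) (by omega)
        have e2 := hMt (max Mt Mb) (le_max_left _ _)
        rw [show K1 + (k - K1) = k by omega] at e1
        rw [e1, e2]
      · have e1 := hMb (k - K1) (by omega)
        have e2 := hMb (max Mt Mb) (le_max_right _ _)
        rw [show K1 + (k - K1) = k by omega] at e1
        rw [e1, e2]
  choose Kf' hKf' using hfrozen
  set P : Finset A := Finset.univ.filter
    (fun z => ¬ (∀ K, ∃ k, K ≤ k ∧ (z = att k ∨ z = abt k))) with hPdef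
  obtain ⟨zstar, hzstar⟩ := hpassive
  have hPne : P.Nonempty := ⟨zstar, Finset.mem_filter.2 ⟨Finset.mem_univ _, hzstar⟩⟩
  set K1 := Finset.univ.sup Kf' with hK1def
  have hK1le : ∀ z, Kf' z ≤ K1 := fun z => Finset.le_sup (Finset.mem_univ z)
  have hPfro : ∀ z ∈ P, ∀ k, K1 ≤ k →
      (z ≠ att k ∧ z ≠ abt k) ∧ pt k z = pt K1 z ∧ pb k z = pb K1 z := by
    intro z hzP k hk
    have hzp : ¬ (∀ K, ∃ k, K ≤ k ∧ (z = att k ∨ z = abt k)) :=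
      (Finset.mem_filter.1 hzP).2
    have h1 := hKf' z hzp k (le_trans (hK1le z) hk)
    have h2 := hKf' z hzp K1 (hK1le z)
    exact ⟨h1.1, by rw [h1.2.1, h2.2.1], by rw [h1.2.2, h2.2.2]⟩
  set pP := (P.image (fun z => pt K1 z)).max' (hPne.image _) with hpPdef
  set qP := (P.image (fun z => pb K1 z)).max' (hPne.image _) with hqPdef
  obtain ⟨zP, hzPP, hzPval⟩ :=
    Finset.mem_image.1 ((P.image (fun z => pt K1 z)).max'_mem (hPne.image _))
  obtain ⟨zQ, hzQP, hzQval⟩ :=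
    Finset.mem_image.1 ((P.image (fun z => pb K1 z)).max'_mem (hPne.image _))
  have hpPle : ∀ z ∈ P, pt K1 z ≤ pP :=
    fun z hz => Finset.le_max' _ _ (Finset.mem_image_of_mem _ hz)
  have hqPle : ∀ z ∈ P, pb K1 z ≤ qP :=
    fun z hz => Finset.le_max' _ _ (Finset.mem_image_of_mem _ hz)
  have hpP1 : 1 ≤ pP := by
    have := ((gk K1).trng zP).1
    omega
  have hpPd : pP < d := by
    by_contra h
    push_neg at h
    have h1 : pt K1 zP = d := by
      have := ((gk K1).trng zP).2
      omega
    have h2 : zP = att K1 := (gk K1).tinj (h1.trans (hat K1).symm)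
    exact ((hPfro zP hzPP K1 le_rfl).1.1) h2
  have hqPd : qP < d := by
    by_contra h
    push_neg at h
    have h1 : pb K1 zQ = d := by
      have := ((gk K1).brng zQ).2
      omega
    have h2 : zQ = abt K1 := (gk K1).binj (h1.trans (hab K1).symm)
    exact ((hPfro zQ hzQP K1 le_rfl).1.2) h2
  have hclaimT : ∀ k, K1 ≤ k → IB k → pP ≤ pt k (abt k) := by
    intro k hk hbk
    by_contra h
    push_neg at h
    have hfz := hPfro zP hzPP
    have h1 : pt k zP = pP := by rw [(hfz k hk).2.1, hzPval]
    have h2 : pt (k+1) zP = pP := by rw [(hfz (k+1) (by omega)).2.1, hzPval]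
    have h3 : pt (k+1) zP = pt k zP + 1 :=
      hbk.2.2.2.2.1 zP (hfz k hk).1.1 (by omega)
    omega
  have hclaimB : ∀ k, K1 ≤ k → IT k → qP ≤ pb k (att k) := by
    intro k hk htk
    by_contra h
    push_neg at h
    have hfz := hPfro zQ hzQP
    have h1 : pb k zQ = qP := by rw [(hfz k hk).2.2, hzQval]
    have h2 : pb (k+1) zQ = qP := by rw [(hfz (k+1) (by omega)).2.2, hzQval]
    have h3 : pb (k+1) zQ = pb k zQ + 1 :=
      htk.2.2.2.2.1 zQ (hfz k hk).1.2 (by omega)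
    omega
  have hsticky : ∀ k, K1 ≤ k → ∀ w,
      (pP < pt k w → pP < pt (k+1) w) ∧ (qP < pb k w → qP < pb (k+1) w) := by
    intro k hk w
    constructor
    · intro hw
      rcases hcase' k with tc | bc
      · rw [tc.2.1]
        exact hw
      · rcases eq_or_ne w (att k) with rfl | hwa
        · rw [bc.2.2.2.1]
          have := hclaimT k hk bc
          omega
        · by_cases h2 : pt k w ≤ pt k (abt k)
          · rw [bc.2.2.1 w h2]
            exact hw
          · rw [bc.2.2.2.2.1 w hwa (by omega)]
            omega
    · intro hw
      rcases hcase' k with tc | bc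
      · rcases eq_or_ne w (abt k) with rfl | hwb
        · rw [tc.2.2.2.1]
          have := hclaimB k hk tc
          omega
        · by_cases h2 : pb k w ≤ pb k (att k)
          · rw [tc.2.2.1 w h2]
            exact hw
          · rw [tc.2.2.2.2.1 w hwb (by omega)]
            omega
      · rw [bc.2.1]
        exact hw
  have hrise : ∀ w, ∃ Kw, (w ∉ P) →
      ∀ k, Kw ≤ k → pP < pt k w ∧ qP < pb k w := by
    intro w
    by_cases hwP : w ∈ P
    · exact ⟨0, fun h => absurd hwP h⟩
    · have hact : ∀ K, ∃ k, K ≤ k ∧ (w = att k ∨ w = abt k) := by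
        by_contra hno
        exact hwP (Finset.mem_filter.2 ⟨Finset.mem_univ _, hno⟩)
      have hws : ∀ K, ∃ k, K ≤ k ∧ WS w k := by
        have hio2 : ∀ K, ∃ k, K ≤ k ∧ (WS w k ∨ LS w k) := by
          intro K
          obtain ⟨k, hk1, hk2⟩ := hact K
          refine ⟨k, hk1, ?_⟩
          rcases hk2 with h | h
          · rcases hcase' k with tc | bc
            · exact Or.inl (Or.inl ⟨tc, h⟩)
            · exact Or.inr (Or.inr ⟨bc, h⟩)
          · rcases hcase' k with tc | bc
            · exact Or.inr (Or.inl ⟨tc, h⟩)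
            · exact Or.inl (Or.inr ⟨bc, h⟩)
        rcases io_or hio2 with h | h
        · exact h
        · exact hls_io_ws w h
      obtain ⟨k1, hk11, hk12⟩ := hws K1
      have hboth : pP < pt k1 w ∧ qP < pb k1 w := by
        rcases hk12 with ⟨hITk, hweq⟩ | ⟨hIBk, hweq⟩
        · constructor
          · have h0 : pt k1 w = d := by rw [hweq]; exact hat k1
            omega
          · have h1 : qP ≤ pb k1 (att k1) := hclaimB k1 hk11 hITk
            rw [← hweq] at h1
            have h2 : pb k1 w ≠ qP := by
              intro heq
              have h3 : pb k1 zQ = qP := by rw [(hPfro zQ hzQP k1 hk11).2.2, hzQval]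
              have h4 : w = zQ := (gk k1).binj (heq.trans h3.symm)
              refine (hPfro zQ hzQP k1 hk11).1.1 ?_
              rw [← h4]
              exact hweq
            omega
        · constructor
          · have h1 : pP ≤ pt k1 (abt k1) := hclaimT k1 hk11 hIBk
            rw [← hweq] at h1
            have h2 : pt k1 w ≠ pP := by
              intro heq
              have h3 : pt k1 zP = pP := by rw [(hPfro zP hzPP k1 hk11).2.1, hzPval]
              have h4 : w = zP := (gk k1).tinj (heq.trans h3.symm)
              refine (hPfro zP hzPP k1 hk11).1.2 ?_
              rw [← h4]
              exact hweq
            omega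
          · have h0 : pb k1 w = d := by rw [hweq]; exact hab k1
            omega
      refine ⟨k1, fun _ k hk => ?_⟩
      obtain ⟨m, rfl⟩ : ∃ m, k = k1 + m := ⟨k - k1, by omega⟩
      clear hk
      induction m with
      | zero => exact hboth
      | succ m ihm =>
        have hstep := hsticky (k1+m) (by omega) w
        exact ⟨hstep.1 ihm.1, hstep.2 ihm.2⟩
  choose Kw hKw using hrise
  set K2 := max K1 (Finset.univ.sup Kw) with hK2def
  have hkK1 : K1 ≤ K2 := le_max_left _ _
  have hTset : ∀ z, pt K2 z ≤ pP ↔ z ∈ P := by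
    intro z
    constructor
    · intro hz
      by_contra hzP
      have h1 := hKw z hzP K2
        (le_trans (Finset.le_sup (Finset.mem_univ z)) (le_max_right _ _))
      omega
    · intro hz
      rw [(hPfro z hz K2 hkK1).2.1]
      exact hpPle z hz
  have hBset : ∀ z, pb K2 z ≤ qP ↔ z ∈ P := by
    intro z
    constructor
    · intro hz
      by_contra hzP
      have h1 := hKw z hzP K2
        (le_trans (Finset.le_sup (Finset.mem_univ z)) (le_max_right _ _))
      omega
    · intro hz
      rw [(hPfro z hz K2 hkK1).2.2]
      exact hqPle z hz
  have hcardT : (Finset.univ.filter (fun z => pt K2 z ≤ pP)).card = pP := by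
    have himg : Finset.image (pt K2) (Finset.univ.filter (fun z => pt K2 z ≤ pP))
        = Finset.Icc 1 pP := by
      ext n
      simp only [Finset.mem_image, Finset.mem_filter, Finset.mem_univ, true_and,
        Finset.mem_Icc]
      constructor
      · rintro ⟨z, hz, rfl⟩
        exact ⟨((gk K2).trng z).1, hz⟩
      · rintro ⟨h1, h2⟩
        obtain ⟨z, hz⟩ := psurj (gk K2).tinj (gk K2).trng (gk K2).card h1
          (by omega : n ≤ d)
        exact ⟨z, by omega, hz⟩
    have h5 : (Finset.Icc 1 pP).card
        = (Finset.univ.filter (fun z => pt K2 z ≤ pP)).card := by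
      rw [← himg]
      exact Finset.card_image_of_injective _ (gk K2).tinj
    rw [Nat.card_Icc] at h5
    omega
  have hcardB : (Finset.univ.filter (fun z => pb K2 z ≤ qP)).card = qP := by
    have himg : Finset.image (pb K2) (Finset.univ.filter (fun z => pb K2 z ≤ qP))
        = Finset.Icc 1 qP := by
      ext n
      simp only [Finset.mem_image, Finset.mem_filter, Finset.mem_univ, true_and,
        Finset.mem_Icc]
      constructor
      · rintro ⟨z, hz, rfl⟩
        exact ⟨((gk K2).brng z).1, hz⟩
      · rintro ⟨h1, h2⟩
        obtain ⟨z, hz⟩ := psurj (gk K2).binj (gk K2).brng (gk K2).card h1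
          (by omega : n ≤ d)
        exact ⟨z, by omega, hz⟩
    have h5 : (Finset.Icc 1 qP).card
        = (Finset.univ.filter (fun z => pb K2 z ≤ qP)).card := by
      rw [← himg]
      exact Finset.card_image_of_injective _ (gk K2).binj
    rw [Nat.card_Icc] at h5
    omega
  have hTP : Finset.univ.filter (fun z => pt K2 z ≤ pP) = P := by
    ext z
    simp only [Finset.mem_filter, Finset.mem_univ, true_and]
    exact hTset z
  have hBP : Finset.univ.filter (fun z => pb K2 z ≤ qP) = P := by
    ext z
    simp only [Finset.mem_filter, Finset.mem_univ, true_and]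
    exact hBset z
  have hpPP : pP = P.card := by rw [← hcardT, hTP]
  have hqPP : qP = P.card := by rw [← hcardB, hBP]
  refine (gk K2).adm pP hpP1 hpPd ?_
  ext z
  simp only [Set.mem_setOf_eq]
  rw [hTset z]
  have hpq : pP = qP := by omega
  rw [hpq]
  exact (hBset z).symm
/-- (Keane.)  An IET `T(π,λ)` admits every step of Rauzy induction if and only
if it has no connections.  In particular, there is a countable family of
hyperplanes in `ℝ₊^𝒜` outside of which every `T(π,λ)` is infinitely
renormalizable. -/
theorem infinitely_renormalizable_iff_no_connection
    (h2 : 2 ≤ Fintype.card A)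
    (pit pib : A → ℕ)
    (hpit : Set.BijOn pit Set.univ (Set.Ico 1 (Fintype.card A + 1)))
    (hpib : Set.BijOn pib Set.univ (Set.Ico 1 (Fintype.card A + 1)))
    (hadm : ∀ k : ℕ, 1 ≤ k → k < Fintype.card A →
      {a : A | pit a ≤ k} ≠ {a : A | pib a ≤ k}) :
    (∀ lam : A → ℝ, (∀ x, 0 < lam x) →
      (AdmitsAllSteps (Fintype.card A) pit pib lam ↔
        ¬ HasConnection pit pib lam)) ∧
    (∃ S : ℕ → ((A → ℝ) →ₗ[ℝ] ℝ), (∀ n, S n ≠ 0) ∧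
      ∀ lam : A → ℝ, (∀ x, 0 < lam x) → (∀ n, S n lam ≠ 0) →
        AdmitsAllSteps (Fintype.card A) pit pib lam) := by
  haveI hAne : Nonempty A := Fintype.card_pos_iff.1 (by omega)
  constructor
  · intro lam hpos
    have g0 : Good (Fintype.card A) pit pib lam :=
      good_init h2 pit pib lam hpit hpib hadm hpos
    constructor
    · intro had hconn
      obtain ⟨pt, pb, L, hpt0, hpb0, hL0, hst⟩ := had
      obtain ⟨b, a, n, hb2, ha2, horb⟩ := hconn
      have g0' : Good (Fintype.card A) (pt 0) (pb 0) (L 0) := by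
        rw [hpt0, hpb0, hL0]
        exact g0
      have horb' : (ietMap (pt 0) (pb 0) (L 0))^[n] (utI (pb 0) (L 0) b)
          = utI (pt 0) (L 0) a := by
        rw [hpt0, hpb0, hL0]
        exact horb
      have hb2' : 2 ≤ pb 0 b := by rw [hpb0]; exact hb2
      have ha2' : 2 ≤ pt 0 a := by rw [hpt0]; exact ha2
      obtain ⟨y, hy, K, hK⟩ := connection_lower_bound hst g0' hb2' ha2' horb'
      exact no_lower_bound hst g0' hy hK
    · exact fun hnc => no_connection_admits pit pib lam g0 hnc
  · refine ⟨Sfun (Fintype.card A) pit pib, Sfun_ne_zero _ _ _, ?_⟩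
    intro lam hpos hS
    refine avoid_admits pit pib lam (good_init h2 pit pib lam hpit hpib hadm hpos) ?_
    intro w
    have hw := hS (Encodable.encode w)
    rwa [Sfun_encode] at hw

end KeaneIET
end

section
/- For every d ≥ 2, the hyperelliptic Rauzy class (the Rauzy class of the combinatorial datum π with π_t(α) + π_b(α) = d + 1 for all α) contains a cyclic combinatorial datum, i.e., a datum π* for which σ(π*) = π*_b ∘ (π*_t)⁻¹ is a cyclic permutation of {1,…,d} of order d. -/
namespace RauzyHyp

variable {A : Type*} [Fintype A] [DecidableEq A]

/-- Top Rauzy operation relation between combinatorial data `(πt, πb)` and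
`(πt', πb')` (positions are 0-indexed, so the last position is `d - 1`). -/
def TopRel {d : ℕ} (P Q : (A ≃ Fin d) × (A ≃ Fin d)) : Prop :=
  ∃ αt αb : A, (P.1 αt : ℕ) = d - 1 ∧ (P.2 αb : ℕ) = d - 1 ∧
    Q.1 = P.1 ∧
    (∀ χ : A, (P.2 χ : ℕ) ≤ (P.2 αt : ℕ) → (Q.2 χ : ℕ) = (P.2 χ : ℕ)) ∧
    (Q.2 αb : ℕ) = (P.2 αt : ℕ) + 1 ∧
    (∀ χ : A, χ ≠ αb → (P.2 αt : ℕ) < (P.2 χ : ℕ) → (Q.2 χ : ℕ) = (P.2 χ : ℕ) + 1)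

/-- Bottom Rauzy operation relation between combinatorial data. -/
def BotRel {d : ℕ} (P Q : (A ≃ Fin d) × (A ≃ Fin d)) : Prop :=
  ∃ αt αb : A, (P.1 αt : ℕ) = d - 1 ∧ (P.2 αb : ℕ) = d - 1 ∧
    Q.2 = P.2 ∧
    (∀ χ : A, (P.1 χ : ℕ) ≤ (P.1 αb : ℕ) → (Q.1 χ : ℕ) = (P.1 χ : ℕ)) ∧
    (Q.1 αt : ℕ) = (P.1 αb : ℕ) + 1 ∧
    (∀ χ : A, χ ≠ αt → (P.1 αb : ℕ) < (P.1 χ : ℕ) → (Q.1 χ : ℕ) = (P.1 χ : ℕ) + 1)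

/-- One elementary Rauzy operation (`R^t` or `R^b`). -/
def StepRel {d : ℕ} (P Q : (A ≃ Fin d) × (A ≃ Fin d)) : Prop :=
  TopRel P Q ∨ BotRel P Q

/-! ### Auxiliary machinery

We apply the alternating sequence of moves `R^t, R^b, R^t, R^b, …` (in total
`d - 2` moves) to the hyperelliptic datum.  The intermediate data after `2m`
moves have the closed forms `ptf d m` (top) and `pbf d m` (bottom) below, and
one elementary Rauzy move amounts to post-composing with the rotation `cyc` of
an upper interval of positions. -/

/-- Closed form for the top datum after `2m` alternating moves. -/
def ptf (d m i : ℕ) : ℕ :=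
  if i = 0 then 0 else if i ≤ m + 1 then 2 * i - 1
  else if i + m ≤ d - 1 then i + m else 2 * (d - i)

/-- Closed form for the bottom datum after `2m` alternating moves. -/
def pbf (d m i : ℕ) : ℕ :=
  if i < m then 2 * i + 1
  else if i + m ≤ d - 1 then d - 1 - i + m else 2 * (d - i) - 2

/-- Value function of the rotation of the interval `[k+1, d-1]` of positions. -/
def cycf (d k x : ℕ) : ℕ :=
  if x ≤ k then x else if x = d - 1 then k + 1 else x + 1

/-- The rotation of the interval `[k+1, d-1]` as a permutation of `Fin d`. -/
def cyc (d k : ℕ) (h : k + 1 < d) : Fin d ≃ Fin d where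
  toFun x := ⟨cycf d k x, by
    have := x.isLt; unfold cycf; split_ifs <;> first | contradiction | omega⟩
  invFun x := ⟨if (x : ℕ) ≤ k then x else if (x : ℕ) = k + 1 then d - 1 else (x : ℕ) - 1, by
    have := x.isLt; split_ifs <;> first | contradiction | omega⟩
  left_inv x := by
    have := x.isLt; apply Fin.ext; simp only [cycf]
    split_ifs <;> first | contradiction | omega
  right_inv x := by
    have := x.isLt; apply Fin.ext; simp only [cycf]
    split_ifs <;> first | contradiction | omega

lemma ptf_zero (d i : ℕ) (hi : i < d) : ptf d 0 i = i := by
  unfold ptf; split_ifs <;> first | contradiction | omega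

lemma pbf_zero (d i : ℕ) (hi : i < d) : pbf d 0 i = d - 1 - i := by
  unfold pbf; split_ifs <;> first | contradiction | omega

lemma ptf_eq_last (d m j : ℕ) (hm : 2*m+2 ≤ d) (hj : j < d) (h : ptf d m j = d - 1) :
    j = d - 1 - m := by
  unfold ptf at h; split_ifs at h <;> first | contradiction | omega

lemma pbf_at_top (d m : ℕ) (hm : 2*m+2 ≤ d) : pbf d m (d - 1 - m) = 2*m := by
  unfold pbf; split_ifs <;> first | contradiction | omega

lemma cycA (d m i : ℕ) (hm : 2*m+2 ≤ d) (hi : i < d) :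
    cycf d (2*m) (pbf d m i) = pbf d (m+1) i := by
  unfold cycf pbf; split_ifs <;> first | contradiction | omega

lemma pbf_eq_last (d m j : ℕ) (hm : 2*m+3 ≤ d) (hj : j < d) (h : pbf d (m+1) j = d - 1) :
    j = m + 1 := by
  unfold pbf at h; split_ifs at h <;> first | contradiction | omega

lemma ptf_at_bot (d m : ℕ) (hm : 2*m+3 ≤ d) : ptf d m (m+1) = 2*m+1 := by
  unfold ptf; split_ifs <;> first | contradiction | omega

lemma cycB (d m i : ℕ) (hm : 2*m+4 ≤ d) (hi : i < d) :
    cycf d (2*m+1) (ptf d m i) = ptf d (m+1) i := by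
  unfold cycf ptf; split_ifs <;> first | contradiction | omega

lemma shift_lemma (d j : ℕ) (hd : 2 ≤ d) (hj : j + 1 < d) :
    pbf d ((d-1)/2) j = ptf d ((d-2)/2) (j+1) := by
  unfold pbf ptf; split_ifs <;> first | contradiction | omega

lemma shift_lemma_last (d : ℕ) (hd : 2 ≤ d) :
    pbf d ((d-1)/2) (d-1) = ptf d ((d-2)/2) 0 := by
  unfold pbf ptf; split_ifs <;> first | contradiction | omega

/-- A top Rauzy move performed at an even stage of the alternating sequence. -/
lemma stepA {d m : ℕ} (hm : 2*m+2 ≤ d) (e f g : A ≃ Fin d)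
    (hf : ∀ a, (f a : ℕ) = ptf d m (e a)) (hg : ∀ a, (g a : ℕ) = pbf d m (e a)) :
    ∃ g' : A ≃ Fin d, TopRel (f, g) (f, g') ∧ ∀ a, (g' a : ℕ) = pbf d (m+1) (e a) := by
  have hd1 : 2*m + 1 < d := by omega
  refine ⟨g.trans (cyc d (2*m) hd1), ?_, ?_⟩
  · set αt := f.symm ⟨d-1, by omega⟩ with hαt
    set αb := g.symm ⟨d-1, by omega⟩ with hαb
    have hft : (f αt : ℕ) = d - 1 := by rw [hαt, Equiv.apply_symm_apply]
    have hgb : (g αb : ℕ) = d - 1 := by rw [hαb, Equiv.apply_symm_apply]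
    have het : (e αt : ℕ) = d - 1 - m :=
      ptf_eq_last d m _ hm (e αt).isLt (by rw [← hf]; exact hft)
    have hgt : (g αt : ℕ) = 2*m := by rw [hg, het, pbf_at_top d m hm]
    refine ⟨αt, αb, hft, hgb, rfl, ?_, ?_, ?_⟩
    · intro χ hχ
      dsimp only at hχ
      rw [hgt] at hχ
      show cycf d (2*m) (g χ) = (g χ : ℕ)
      unfold cycf; rw [if_pos hχ]
    · show cycf d (2*m) (g αb) = (g αt : ℕ) + 1
      rw [hgb, hgt]; unfold cycf
      split_ifs <;> first | contradiction | omega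
    · intro χ hne hlt
      dsimp only at hlt
      rw [hgt] at hlt
      have hne' : (g χ : ℕ) ≠ d - 1 := by
        intro h
        apply hne
        have : g χ = (⟨d-1, by omega⟩ : Fin d) := Fin.ext h
        rw [hαb, ← this, Equiv.symm_apply_apply]
      show cycf d (2*m) (g χ) = (g χ : ℕ) + 1
      unfold cycf; split_ifs <;> first | contradiction | omega
  · intro a
    show cycf d (2*m) (g a) = _
    rw [hg, cycA d m (e a) hm (e a).isLt]

/-- A bottom Rauzy move performed at an odd stage of the alternating sequence. -/
lemma stepB {d m : ℕ} (hm : 2*m+4 ≤ d) (e f g : A ≃ Fin d)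
    (hf : ∀ a, (f a : ℕ) = ptf d m (e a)) (hg : ∀ a, (g a : ℕ) = pbf d (m+1) (e a)) :
    ∃ f' : A ≃ Fin d, BotRel (f, g) (f', g) ∧ ∀ a, (f' a : ℕ) = ptf d (m+1) (e a) := by
  have hd1 : 2*m + 2 < d := by omega
  refine ⟨f.trans (cyc d (2*m+1) hd1), ?_, ?_⟩
  · set αt := f.symm ⟨d-1, by omega⟩ with hαt
    set αb := g.symm ⟨d-1, by omega⟩ with hαb
    have hft : (f αt : ℕ) = d - 1 := by rw [hαt, Equiv.apply_symm_apply]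
    have hgb : (g αb : ℕ) = d - 1 := by rw [hαb, Equiv.apply_symm_apply]
    have heb : (e αb : ℕ) = m + 1 :=
      pbf_eq_last d m _ (by omega) (e αb).isLt (by rw [← hg]; exact hgb)
    have hfb : (f αb : ℕ) = 2*m + 1 := by rw [hf, heb, ptf_at_bot d m (by omega)]
    refine ⟨αt, αb, hft, hgb, rfl, ?_, ?_, ?_⟩
    · intro χ hχ
      dsimp only at hχ
      rw [hfb] at hχ
      show cycf d (2*m+1) (f χ) = (f χ : ℕ)
      unfold cycf; rw [if_pos hχ]
    · show cycf d (2*m+1) (f αt) = (f αb : ℕ) + 1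
      rw [hft, hfb]; unfold cycf
      split_ifs <;> first | contradiction | omega
    · intro χ hne hlt
      dsimp only at hlt
      rw [hfb] at hlt
      have hne' : (f χ : ℕ) ≠ d - 1 := by
        intro h
        apply hne
        have : f χ = (⟨d-1, by omega⟩ : Fin d) := Fin.ext h
        rw [hαt, ← this, Equiv.symm_apply_apply]
      show cycf d (2*m+1) (f χ) = (f χ : ℕ) + 1
      unfold cycf; split_ifs <;> first | contradiction | omega
  · intro a
    show cycf d (2*m+1) (f a) = _
    rw [hf, cycB d m (e a) hm (e a).isLt]

/-- The alternating chain of Rauzy moves, `2m` moves performed. -/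
lemma chain {d : ℕ} (hd : 2 ≤ d) (e g0 : A ≃ Fin d)
    (hg0 : ∀ a, (g0 a : ℕ) = d - 1 - (e a)) :
    ∀ m, 2*m + 2 ≤ d →
      ∃ f g : A ≃ Fin d, Relation.ReflTransGen StepRel (e, g0) (f, g) ∧
        (∀ a, (f a : ℕ) = ptf d m (e a)) ∧ (∀ a, (g a : ℕ) = pbf d m (e a)) := by
  intro m
  induction m with
  | zero =>
    intro _
    exact ⟨e, g0, Relation.ReflTransGen.refl,
      fun a => by rw [ptf_zero d _ (e a).isLt],
      fun a => by rw [pbf_zero d _ (e a).isLt]; exact hg0 a⟩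
  | succ m ih =>
    intro hm
    obtain ⟨f, g, hreach, hf, hg⟩ := ih (by omega)
    obtain ⟨g', htop, hg'⟩ := stepA (by omega) e f g hf hg
    obtain ⟨f', hbot, hf'⟩ := stepB (by omega) e f g' hf hg'
    exact ⟨f', g', (hreach.tail (Or.inl htop)).tail (Or.inr hbot), hf', hg'⟩

/-- After `d - 2` alternating Rauzy moves we reach the datum
`(ptf d ((d-2)/2), pbf d ((d-1)/2))`. -/
lemma reach_final {d : ℕ} (hd : 2 ≤ d) (e g0 : A ≃ Fin d)
    (hg0 : ∀ a, (g0 a : ℕ) = d - 1 - (e a)) :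
    ∃ f g : A ≃ Fin d, Relation.ReflTransGen StepRel (e, g0) (f, g) ∧
      (∀ a, (f a : ℕ) = ptf d ((d-2)/2) (e a)) ∧
      (∀ a, (g a : ℕ) = pbf d ((d-1)/2) (e a)) := by
  rcases Nat.even_or_odd d with ⟨k, hk⟩ | ⟨k, hk⟩
  · obtain ⟨f, g, hreach, hf, hg⟩ := chain hd e g0 hg0 ((d-2)/2) (by omega)
    refine ⟨f, g, hreach, hf, ?_⟩
    have : (d-1)/2 = (d-2)/2 := by omega
    rw [this]; exact hg
  · obtain ⟨f, g, hreach, hf, hg⟩ := chain hd e g0 hg0 ((d-2)/2) (by omega)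
    obtain ⟨g', htop, hg'⟩ := stepA (by omega) e f g hf hg
    refine ⟨f, g', hreach.tail (Or.inl htop), hf, ?_⟩
    have : (d-1)/2 = (d-2)/2 + 1 := by omega
    rw [this]; exact hg'

lemma finRotate_val {d : ℕ} (j : Fin d) :
    ((finRotate d j : Fin d) : ℕ) = ((j : ℕ) + 1) % d := by
  cases d with
  | zero => exact j.elim0
  | succ n =>
    rw [finRotate_succ_apply, Fin.add_def]
    simp [Fin.val_one', Nat.add_mod]

lemma orderOf_conj' {G : Type*} [Group G] (z r : G) : orderOf (z * r * z⁻¹) = orderOf r := by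
  have h : SemiconjBy z r (z * r * z⁻¹) := by unfold SemiconjBy; group
  exact (h.orderOf_eq).symm

lemma orderOf_finRotate' (d : ℕ) (h2 : 2 ≤ d) : orderOf (finRotate d) = d := by
  have h := (isCycle_finRotate_of_le h2).orderOf
  rw [support_finRotate_of_le h2] at h
  simpa using h

/-- For every `d ≥ 2`, the Rauzy class of the hyperelliptic combinatorial datum
(`π_t(α) + π_b(α) = d + 1` for all `α`, i.e. positions sum to `d - 1` when
0-indexed) contains a cyclic combinatorial datum `π*`, i.e. one for which
`σ(π*) = π*_b ∘ (π*_t)⁻¹` is a cycle of maximal order `d`. -/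
theorem hyperelliptic_class_contains_cyclic_datum
    (h2 : 2 ≤ Fintype.card A)
    (πt πb : A ≃ Fin (Fintype.card A))
    (hhyp : ∀ a : A, (πt a : ℕ) + (πb a : ℕ) = Fintype.card A - 1) :
    ∃ Pstar : (A ≃ Fin (Fintype.card A)) × (A ≃ Fin (Fintype.card A)),
      Relation.ReflTransGen StepRel (πt, πb) Pstar ∧
      Equiv.Perm.IsCycle (Pstar.1.symm.trans Pstar.2 : Equiv.Perm (Fin (Fintype.card A))) ∧
      orderOf (Pstar.1.symm.trans Pstar.2 : Equiv.Perm (Fin (Fintype.card A))) = Fintype.card A := by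
  have hg0 : ∀ a, (πb a : ℕ) = Fintype.card A - 1 - (πt a) := by
    intro a
    have h1 := hhyp a
    have hlt := (πt a).isLt
    omega
  obtain ⟨f, g, hreach, hf, hg⟩ := reach_final h2 πt πb hg0
  set zig : Equiv.Perm (Fin (Fintype.card A)) := πt.symm.trans f with hzig
  have hconj : (f.symm.trans g : Equiv.Perm (Fin (Fintype.card A)))
      = zig * finRotate (Fintype.card A) * zig⁻¹ := by
    apply Equiv.ext
    intro x
    obtain ⟨a, rfl⟩ : ∃ a, f a = x := ⟨f.symm x, f.apply_symm_apply x⟩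
    show g (f.symm (f a)) = zig ((finRotate (Fintype.card A)) (zig⁻¹ (f a)))
    rw [Equiv.symm_apply_apply]
    have hz : zig⁻¹ (f a) = πt a := by
      show zig.symm (f a) = πt a
      rw [hzig]
      simp
    rw [hz]
    apply Fin.ext
    have hrhs : ((zig ((finRotate (Fintype.card A)) (πt a)) : Fin (Fintype.card A)) : ℕ)
        = ptf (Fintype.card A) ((Fintype.card A - 2)/2)
            ((finRotate (Fintype.card A) (πt a) : Fin (Fintype.card A)) : ℕ) := by
      show ((f (πt.symm _) : Fin (Fintype.card A)) : ℕ) = _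
      rw [hf, Equiv.apply_symm_apply]
    rw [hrhs, hg, finRotate_val]
    rcases lt_or_eq_of_le (Nat.succ_le_of_lt (πt a).isLt) with hlt | heq
    · rw [Nat.mod_eq_of_lt hlt]
      exact shift_lemma (Fintype.card A) _ h2 hlt
    · have hv : ((πt a : Fin (Fintype.card A)) : ℕ) = Fintype.card A - 1 := by omega
      rw [hv]
      have hmod : (Fintype.card A - 1 + 1) % Fintype.card A = 0 := by
        rw [Nat.sub_add_cancel (by omega : 1 ≤ Fintype.card A)]
        exact Nat.mod_self _
      rw [hmod]
      exact shift_lemma_last (Fintype.card A) h2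
  refine ⟨(f, g), hreach, ?_, ?_⟩
  · show Equiv.Perm.IsCycle (f.symm.trans g)
    rw [hconj]
    exact (isCycle_finRotate_of_le h2).conj
  · show orderOf (f.symm.trans g : Equiv.Perm (Fin (Fintype.card A))) = Fintype.card A
    rw [hconj, orderOf_conj', orderOf_finRotate' (Fintype.card A) h2]

end RauzyHyp
end
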